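/- arXiv:2305.15300 — 6 statements merged into one kernel-verified Lean document; each statement's English description precedes it below -/
import Mathlib

section
/- Let V be an n-dimensional complex vector space, n ≥ 1, and N₀, N₁ two norms on V. Then d_∞(N₀, N₁) is the multiplicative gap between N₀ and N₁: it equals the minimal constant C ≥ 0 such that N₀ ≤ exp(C)·N₁ and N₁ ≤ exp(C)·N₀ pointwise on V. -/
open scoped BigOperators
open Filter Classical

noncomputable section

variable {V : Type*} [AddCommGroup V] [Module ℂ V]

/-- A filtration on a complex vector space `V`: a left-continuous, decreasing family of
subspaces which equals `⊤` for `t` small enough and `⊥` for `t` large enough. -/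
structure IsFiltration' (F : ℝ → Submodule ℂ V) : Prop where
  antitone : ∀ ⦃s t : ℝ⦄, s ≤ t → F t ≤ F s
  left_cont : ∀ t : ℝ, ∃ ε > 0, ∀ δ : ℝ, 0 < δ → δ < ε → F (t - δ) = F t
  eventually_top : ∃ t₀ : ℝ, ∀ t ≤ t₀, F t = ⊤
  eventually_bot : ∃ t₁ : ℝ, ∀ t, t₁ ≤ t → F t = ⊥

/-- The weight of a vector with respect to a filtration. -/
def filtWeight (F : ℝ → Submodule ℂ V) (s : V) : ℝ :=
  sSup {l : ℝ | s ∈ F l}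

/-- The non-Archimedean norm `χ_𝓕` associated with a filtration. -/
def filtChi (F : ℝ → Submodule ℂ V) (s : V) : ℝ :=
  if s = 0 then 0 else Real.exp (-(filtWeight F s))

/-- The jumping numbers `e_𝓕(j)` of a filtration. -/
def jumpNum (F : ℝ → Submodule ℂ V) (j : ℕ) : ℝ :=
  sSup {t : ℝ | j ≤ Module.finrank ℂ (F t)}

/-- The norm associated with a Hermitian inner product. -/
def hnorm (c : InnerProductSpace.Core ℂ V) : V → ℝ :=
  fun v => Real.sqrt ((c.inner v v).re)

/-- The `j`-th element of the logarithmic relative spectrum of two norms. -/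
def relSpec (N₀ N₁ : V → ℝ) (j : ℕ) : ℝ :=
  sSup {r : ℝ | ∃ W : Submodule ℂ V, Module.finrank ℂ W = j ∧
    r = sInf {x : ℝ | ∃ w ∈ W, w ≠ 0 ∧ x = Real.log (N₁ w / N₀ w)}}

/-- The distance `d_p` between two norms, `p ∈ [1, ∞)`. -/
def dp (p : ℝ) (N₀ N₁ : V → ℝ) : ℝ :=
  ((∑ j ∈ Finset.Icc 1 (Module.finrank ℂ V), |relSpec N₀ N₁ j| ^ p) /
    (Module.finrank ℂ V : ℝ)) ^ (1 / p)

/-- The distance `d_∞` between two norms. -/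
def dInf (N₀ N₁ : V → ℝ) : ℝ :=
  sSup {r : ℝ | ∃ j ∈ Finset.Icc 1 (Module.finrank ℂ V), r = |relSpec N₀ N₁ j|}

/-- A family of vectors is orthonormal with respect to a Hermitian inner product. -/
def OrthonormalFor (c : InnerProductSpace.Core ℂ V) {ι : Type*} (s : ι → V) : Prop :=
  ∀ i j, c.inner (s i) (s j) = if i = j then 1 else 0

/-- A family of vectors is orthogonal with respect to a Hermitian inner product. -/
def OrthogonalFor (c : InnerProductSpace.Core ℂ V) {ι : Type*} (s : ι → V) : Prop :=
  ∀ i j, i ≠ j → c.inner (s i) (s j) = 0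

/-- `c : ℝ → InnerProductSpace.Core ℂ V` is the geodesic ray of Hermitian norms emanating
from `c 0` associated with the filtration `F` via the adapted orthonormal basis `s`:
`s` is orthonormal for `c 0`, `s j ∈ 𝓕^{e_𝓕(j)} V`, and for each `t ≥ 0` the rescaled basis
`(exp (t e_𝓕(i)) • s i)` is orthonormal for `c t`. -/
def IsGeodesicRayFor (F : ℝ → Submodule ℂ V) {n : ℕ} (s : Fin n → V)
    (c : ℝ → InnerProductSpace.Core ℂ V) : Prop :=
  OrthonormalFor (c 0) s ∧
  (∀ i : Fin n, s i ∈ F (jumpNum F (i.1 + 1))) ∧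
  ∀ t : ℝ, 0 ≤ t → ∀ i j : Fin n,
    (c t).inner (Real.exp (t * jumpNum F (i.1 + 1)) • s i)
      (Real.exp (t * jumpNum F (j.1 + 1)) • s j) = if i = j then 1 else 0

/-- A (complex) norm on a vector space. -/
structure IsComplexNorm (N : V → ℝ) : Prop where
  eq_zero_iff : ∀ x : V, N x = 0 ↔ x = 0
  smul : ∀ (a : ℂ) (x : V), N (a • x) = ‖a‖ * N x
  add_le : ∀ x y : V, N (x + y) ≤ N x + N y



/-! ### Auxiliary lemmas for Statement 12 -/

lemma IsComplexNorm.neg' {N : V → ℝ} (h : IsComplexNorm N) (v : V) : N (-v) = N v := by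
  have := h.smul (-1) v
  simpa using this

lemma IsComplexNorm.nonneg {N : V → ℝ} (h : IsComplexNorm N) (v : V) : 0 ≤ N v := by
  have h0 : N 0 = 0 := (h.eq_zero_iff 0).2 rfl
  have h2 := h.add_le v (-v)
  rw [add_neg_cancel, h0, h.neg'] at h2
  linarith

/-- The group norm underlying a complex norm. -/
def IsComplexNorm.toAddGroupNorm {N : V → ℝ} (h : IsComplexNorm N) : AddGroupNorm V where
  toFun := N
  map_zero' := (h.eq_zero_iff 0).2 rfl
  add_le' := h.add_le
  neg' := h.neg'
  eq_zero_of_map_eq_zero' := fun x hx => (h.eq_zero_iff x).1 hx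

lemma norm_compare_aux {V : Type*} [AddCommGroup V] [Module ℂ V] [FiniteDimensional ℂ V]
    {N : V → ℝ} (h : IsComplexNorm N) :
    ∃ C > 0, ∀ v : V, N v ≤ C * ‖(Module.finBasis ℂ V).equivFun v‖ ∧
      ‖(Module.finBasis ℂ V).equivFun v‖ ≤ C * N v := by
  letI : NormedAddCommGroup V := h.toAddGroupNorm.toNormedAddCommGroup
  letI : NormedSpace ℂ V := ⟨fun a x => le_of_eq (by
    exact h.smul a x)⟩
  set e := (Module.finBasis ℂ V).equivFun with he
  have hc : Continuous e := LinearMap.continuous_of_finiteDimensional (e : V →ₗ[ℂ] (Fin (Module.finrank ℂ V) → ℂ))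
  have hc' : Continuous e.symm := LinearMap.continuous_of_finiteDimensional (e.symm : (Fin (Module.finrank ℂ V) → ℂ) →ₗ[ℂ] V)
  let f : V →L[ℂ] (Fin (Module.finrank ℂ V) → ℂ) := ⟨(e : V →ₗ[ℂ] _), hc⟩
  let g : (Fin (Module.finrank ℂ V) → ℂ) →L[ℂ] V := ⟨(e.symm : _ →ₗ[ℂ] V), hc'⟩
  refine ⟨max ‖f‖ ‖g‖ + 1, by positivity, fun v => ?_⟩
  have h1 : ‖e v‖ ≤ ‖f‖ * ‖v‖ := f.le_opNorm v
  have h3 : ‖v‖ ≤ ‖g‖ * ‖e v‖ := by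
    have := g.le_opNorm (e v)
    rwa [show g (e v) = v from e.symm_apply_apply v] at this
  have h2 : ‖v‖ = N v := rfl
  rw [h2] at h1 h3
  have hf : 0 ≤ ‖f‖ := norm_nonneg f
  have hg : 0 ≤ ‖g‖ := norm_nonneg g
  have hev : 0 ≤ ‖e v‖ := norm_nonneg _
  have hNv : 0 ≤ N v := h.nonneg v
  constructor <;> nlinarith [le_max_left ‖f‖ ‖g‖, le_max_right ‖f‖ ‖g‖]

lemma exists_comparable {V : Type*} [AddCommGroup V] [Module ℂ V] [FiniteDimensional ℂ V]
    {N₀ N₁ : V → ℝ} (h₀ : IsComplexNorm N₀) (h₁ : IsComplexNorm N₁) :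
    ∃ C : ℝ, 0 ≤ C ∧ (∀ v, N₀ v ≤ Real.exp C * N₁ v) ∧ (∀ v, N₁ v ≤ Real.exp C * N₀ v) := by
  obtain ⟨C₀, hC₀, h₀'⟩ := norm_compare_aux h₀
  obtain ⟨C₁, hC₁, h₁'⟩ := norm_compare_aux h₁
  set K := max (C₀ * C₁) 1 with hKdef
  have hK1 : (1 : ℝ) ≤ K := le_max_right _ _
  have hKpos : 0 < K := by linarith
  refine ⟨Real.log K, Real.log_nonneg hK1, ?_, ?_⟩ <;> intro v <;>
    rw [Real.exp_log hKpos]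
  · obtain ⟨ha, hb⟩ := h₀' v
    obtain ⟨hc, hd⟩ := h₁' v
    have h5 : N₀ v ≤ C₀ * C₁ * N₁ v := by
      nlinarith [h₁.nonneg v, norm_nonneg ((Module.finBasis ℂ V).equivFun v)]
    calc N₀ v ≤ C₀ * C₁ * N₁ v := h5
      _ ≤ K * N₁ v := by nlinarith [h₁.nonneg v, le_max_left (C₀*C₁) 1]
  · obtain ⟨ha, hb⟩ := h₀' v
    obtain ⟨hc, hd⟩ := h₁' v
    have h5 : N₁ v ≤ C₀ * C₁ * N₀ v := by
      nlinarith [h₀.nonneg v, norm_nonneg ((Module.finBasis ℂ V).equivFun v)]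
    calc N₁ v ≤ C₀ * C₁ * N₀ v := h5
      _ ≤ K * N₀ v := by nlinarith [h₀.nonneg v, le_max_left (C₀*C₁) 1]

/-- `d_∞(N₀,N₁)` is the multiplicative gap between two norms: the least
`C ≥ 0` such that `N₀ ≤ exp C · N₁` and `N₁ ≤ exp C · N₀` pointwise. -/
theorem dInf_eq_multiplicative_gap
    {V : Type*} [AddCommGroup V] [Module ℂ V] [FiniteDimensional ℂ V]
    {n : ℕ} (hn : 1 ≤ n) (hdim : Module.finrank ℂ V = n)
    (N₀ N₁ : V → ℝ) (h₀ : IsComplexNorm N₀) (h₁ : IsComplexNorm N₁) :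
    IsLeast {C : ℝ | 0 ≤ C ∧ (∀ v : V, N₀ v ≤ Real.exp C * N₁ v) ∧
      (∀ v : V, N₁ v ≤ Real.exp C * N₀ v)} (dInf N₀ N₁) := by
  classical
  obtain ⟨K, hK0, hK1, hK2⟩ := exists_comparable h₀ h₁
  have hpos₀ : ∀ v : V, v ≠ 0 → 0 < N₀ v := fun v hv =>
    (h₀.nonneg v).lt_of_ne (fun h => hv ((h₀.eq_zero_iff v).1 h.symm))
  have hpos₁ : ∀ v : V, v ≠ 0 → 0 < N₁ v := fun v hv =>
    (h₁.nonneg v).lt_of_ne (fun h => hv ((h₁.eq_zero_iff v).1 h.symm))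
  have hratio : ∀ v : V, v ≠ 0 → 0 < N₁ v / N₀ v := fun v hv =>
    div_pos (hpos₁ v hv) (hpos₀ v hv)
  have hrK : ∀ v : V, v ≠ 0 → Real.log (N₁ v / N₀ v) ≤ K := fun v hv => by
    rw [Real.log_le_iff_le_exp (hratio v hv), div_le_iff₀ (hpos₀ v hv)]
    exact hK2 v
  have hrK' : ∀ v : V, v ≠ 0 → -K ≤ Real.log (N₁ v / N₀ v) := fun v hv => by
    rw [Real.le_log_iff_exp_le (hratio v hv), le_div_iff₀ (hpos₀ v hv)]
    have hmul : Real.exp (-K) * Real.exp K = 1 := by rw [← Real.exp_add]; simp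
    nlinarith [Real.exp_pos (-K), hK1 v, h₁.nonneg v]
  -- key sets
  set SA : Set ℝ := {x | ∃ v : V, v ≠ 0 ∧ x = Real.log (N₁ v / N₀ v)} with hSA
  set SB : Set ℝ := {x | ∃ v : V, v ≠ 0 ∧ x = -Real.log (N₁ v / N₀ v)} with hSB
  obtain ⟨v₀, hv₀⟩ : ∃ v : V, v ≠ 0 := by
    have hb := Module.finBasis ℂ V
    exact ⟨hb ⟨0, by rw [hdim]; omega⟩, hb.ne_zero _⟩
  have hSAne : SA.Nonempty := ⟨_, v₀, hv₀, rfl⟩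
  have hSAbdd : BddAbove SA := ⟨K, by rintro x ⟨v, hv, rfl⟩; exact hrK v hv⟩
  have hSBne : SB.Nonempty := ⟨_, v₀, hv₀, rfl⟩
  have hSBbdd : BddAbove SB := ⟨K, by rintro x ⟨v, hv, rfl⟩; linarith [hrK' v hv]⟩
  set A := sSup SA with hA
  set B := sSup SB with hB
  have hSW_bddBelow : ∀ W : Submodule ℂ V,
      BddBelow {x : ℝ | ∃ w ∈ W, w ≠ 0 ∧ x = Real.log (N₁ w / N₀ w)} :=
    fun W => ⟨-K, by rintro x ⟨w, hw, hw0, rfl⟩; exact hrK' w hw0⟩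
  -- bounds for each relSpec value
  have hTj : ∀ j : ℕ, 1 ≤ j → j ≤ n →
      -B ≤ relSpec N₀ N₁ j ∧ relSpec N₀ N₁ j ≤ A := by
    intro j hj1 hjn
    have hWex : ∃ W : Submodule ℂ V, Module.finrank ℂ W = j := by
      have hle : j ≤ Module.finrank ℂ V := by rw [hdim]; exact hjn
      refine ⟨Submodule.span ℂ (Set.range ((Module.finBasis ℂ V) ∘ Fin.castLE hle)), ?_⟩
      rw [finrank_span_eq_card ((Module.finBasis ℂ V).linearIndependent.comp _
        (Fin.castLE_injective hle)), Fintype.card_fin]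
    have hTfacts : ∀ x ∈ {x : ℝ | ∃ W : Submodule ℂ V, Module.finrank ℂ W = j ∧
        x = sInf {y : ℝ | ∃ w ∈ W, w ≠ 0 ∧ y = Real.log (N₁ w / N₀ w)}},
        -B ≤ x ∧ x ≤ A := by
      rintro x ⟨W, hW, rfl⟩
      obtain ⟨w, hwW, hw0⟩ : ∃ w : V, w ∈ W ∧ w ≠ 0 :=
        Submodule.exists_mem_ne_zero_of_ne_bot (by
          intro hbot; rw [hbot, finrank_bot] at hW; omega)
      have hSne : Set.Nonempty {y : ℝ | ∃ w ∈ W, w ≠ 0 ∧ y = Real.log (N₁ w / N₀ w)} :=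
        ⟨_, w, hwW, hw0, rfl⟩
      constructor
      · refine le_csInf hSne ?_
        rintro y ⟨u, huW, hu0, rfl⟩
        have hBu : -Real.log (N₁ u / N₀ u) ≤ B := le_csSup hSBbdd ⟨u, hu0, rfl⟩
        linarith
      · calc sInf {y : ℝ | ∃ w ∈ W, w ≠ 0 ∧ y = Real.log (N₁ w / N₀ w)}
            ≤ Real.log (N₁ w / N₀ w) := csInf_le (hSW_bddBelow W) ⟨w, hwW, hw0, rfl⟩
          _ ≤ A := le_csSup hSAbdd ⟨w, hw0, rfl⟩
    have hTne : Set.Nonempty {x : ℝ | ∃ W : Submodule ℂ V, Module.finrank ℂ W = j ∧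
        x = sInf {y : ℝ | ∃ w ∈ W, w ≠ 0 ∧ y = Real.log (N₁ w / N₀ w)}} := by
      obtain ⟨W, hW⟩ := hWex; exact ⟨_, W, hW, rfl⟩
    constructor
    · obtain ⟨x, hx⟩ := hTne
      exact le_trans (hTfacts x hx).1
        (le_csSup ⟨A, fun y hy => (hTfacts y hy).2⟩ hx)
    · exact csSup_le hTne fun x hx => (hTfacts x hx).2
  -- relSpec 1 is at least A
  have hA_le : A ≤ relSpec N₀ N₁ 1 := by
    refine csSup_le hSAne ?_
    rintro x ⟨v, hv, rfl⟩
    have hset : {y : ℝ | ∃ w ∈ (Submodule.span ℂ {v} : Submodule ℂ V), w ≠ 0 ∧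
        y = Real.log (N₁ w / N₀ w)} = {Real.log (N₁ v / N₀ v)} := by
      ext y
      constructor
      · rintro ⟨w, hwW, hw0, rfl⟩
        obtain ⟨a, rfl⟩ := Submodule.mem_span_singleton.1 hwW
        have ha : a ≠ 0 := by rintro rfl; simp at hw0
        have hratio' : N₁ (a • v) / N₀ (a • v) = N₁ v / N₀ v := by
          rw [h₁.smul, h₀.smul, mul_div_mul_left _ _ (norm_ne_zero_iff.mpr ha)]
        rw [Set.mem_singleton_iff, hratio']
      · rintro hy
        rw [Set.mem_singleton_iff] at hy
        exact ⟨v, Submodule.mem_span_singleton_self v, hv, hy⟩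
    have hmem : Real.log (N₁ v / N₀ v) ∈ {x : ℝ | ∃ W : Submodule ℂ V,
        Module.finrank ℂ W = 1 ∧
        x = sInf {y : ℝ | ∃ w ∈ W, w ≠ 0 ∧ y = Real.log (N₁ w / N₀ w)}} :=
      ⟨Submodule.span ℂ {v}, finrank_span_singleton hv, by rw [hset, csInf_singleton]⟩
    refine le_csSup ⟨A, ?_⟩ hmem
    intro y hy
    exact ((hTj 1 le_rfl hn).2.trans_eq rfl : relSpec N₀ N₁ 1 ≤ A) |> fun _ => by
      rcases hy with ⟨W, hW, rfl⟩
      obtain ⟨w, hwW, hw0⟩ : ∃ w : V, w ∈ W ∧ w ≠ 0 :=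
        Submodule.exists_mem_ne_zero_of_ne_bot (by
          intro hbot; rw [hbot, finrank_bot] at hW; omega)
      calc sInf {y : ℝ | ∃ w ∈ W, w ≠ 0 ∧ y = Real.log (N₁ w / N₀ w)}
          ≤ Real.log (N₁ w / N₀ w) := csInf_le (hSW_bddBelow W) ⟨w, hwW, hw0, rfl⟩
        _ ≤ A := le_csSup hSAbdd ⟨w, hw0, rfl⟩
  -- relSpec n is sInf over all of V, hence B ≤ -relSpec n
  have hB_le : B ≤ -relSpec N₀ N₁ n := by
    have htop : Module.finrank ℂ (⊤ : Submodule ℂ V) = n := by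
      rw [finrank_top]; exact hdim
    have hrseq : {x : ℝ | ∃ W : Submodule ℂ V, Module.finrank ℂ W = n ∧
        x = sInf {y : ℝ | ∃ w ∈ W, w ≠ 0 ∧ y = Real.log (N₁ w / N₀ w)}} =
        {sInf {y : ℝ | ∃ w ∈ (⊤ : Submodule ℂ V), w ≠ 0 ∧ y = Real.log (N₁ w / N₀ w)}} := by
      ext x
      constructor
      · rintro ⟨W, hW, rfl⟩
        have hWtop : W = ⊤ := Submodule.eq_top_of_finrank_eq (by rw [hW, hdim])
        rw [Set.mem_singleton_iff, hWtop]
      · rintro hx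
        rw [Set.mem_singleton_iff] at hx
        exact ⟨⊤, htop, hx⟩
    have hrel : relSpec N₀ N₁ n =
        sInf {y : ℝ | ∃ w ∈ (⊤ : Submodule ℂ V), w ≠ 0 ∧ y = Real.log (N₁ w / N₀ w)} := by
      show sSup _ = _
      rw [hrseq, csSup_singleton]
    rw [hrel]
    refine csSup_le hSBne ?_
    rintro x ⟨v, hv, rfl⟩
    have hle : sInf {y : ℝ | ∃ w ∈ (⊤ : Submodule ℂ V), w ≠ 0 ∧ y = Real.log (N₁ w / N₀ w)}
        ≤ Real.log (N₁ v / N₀ v) :=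
      csInf_le (hSW_bddBelow ⊤) ⟨v, Submodule.mem_top, hv, rfl⟩
    linarith
  -- dInf equals max A B
  have h1mem : (1 : ℕ) ∈ Finset.Icc 1 (Module.finrank ℂ V) :=
    Finset.mem_Icc.2 ⟨le_rfl, by rw [hdim]; exact hn⟩
  have hnmem : n ∈ Finset.Icc 1 (Module.finrank ℂ V) :=
    Finset.mem_Icc.2 ⟨hn, by rw [hdim]⟩
  have hDle : ∀ x ∈ {r : ℝ | ∃ j ∈ Finset.Icc 1 (Module.finrank ℂ V),
      r = |relSpec N₀ N₁ j|}, x ≤ max A B := by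
    rintro x ⟨j, hj, rfl⟩
    rw [Finset.mem_Icc, hdim] at hj
    obtain ⟨hL, hU⟩ := hTj j hj.1 hj.2
    rw [abs_le]
    constructor
    · have := le_max_right A B; linarith
    · exact hU.trans (le_max_left A B)
  have hDne : Set.Nonempty {r : ℝ | ∃ j ∈ Finset.Icc 1 (Module.finrank ℂ V),
      r = |relSpec N₀ N₁ j|} := ⟨_, 1, h1mem, rfl⟩
  have hDbdd : BddAbove {r : ℝ | ∃ j ∈ Finset.Icc 1 (Module.finrank ℂ V),
      r = |relSpec N₀ N₁ j|} := ⟨max A B, hDle⟩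
  have hd_le : dInf N₀ N₁ ≤ max A B := csSup_le hDne hDle
  have hA_dInf : A ≤ dInf N₀ N₁ :=
    hA_le.trans ((le_abs_self _).trans (le_csSup hDbdd ⟨1, h1mem, rfl⟩))
  have hB_dInf : B ≤ dInf N₀ N₁ :=
    (hB_le.trans (neg_le_abs _)).trans (le_csSup hDbdd ⟨n, hnmem, rfl⟩)
  have hdval : dInf N₀ N₁ = max A B := le_antisymm hd_le (max_le hA_dInf hB_dInf)
  constructor
  · rw [hdval]
    have hrv₀A : Real.log (N₁ v₀ / N₀ v₀) ≤ A := le_csSup hSAbdd ⟨v₀, hv₀, rfl⟩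
    have hrv₀B : -Real.log (N₁ v₀ / N₀ v₀) ≤ B := le_csSup hSBbdd ⟨v₀, hv₀, rfl⟩
    have hmA := le_max_left A B
    have hmB := le_max_right A B
    refine ⟨by linarith, ?_, ?_⟩
    · intro v
      by_cases hv : v = 0
      · subst hv
        rw [(h₀.eq_zero_iff 0).2 rfl, (h₁.eq_zero_iff 0).2 rfl, mul_zero]
      · have h2 : -Real.log (N₁ v / N₀ v) ≤ B := le_csSup hSBbdd ⟨v, hv, rfl⟩
        have hlog : Real.log (N₀ v / N₁ v) = -Real.log (N₁ v / N₀ v) := by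
          rw [← inv_div, Real.log_inv]
        have h3 : Real.log (N₀ v / N₁ v) ≤ max A B := by rw [hlog]; linarith
        rw [Real.log_le_iff_le_exp (div_pos (hpos₀ v hv) (hpos₁ v hv)),
          div_le_iff₀ (hpos₁ v hv)] at h3
        linarith
    · intro v
      by_cases hv : v = 0
      · subst hv
        rw [(h₀.eq_zero_iff 0).2 rfl, (h₁.eq_zero_iff 0).2 rfl, mul_zero]
      · have h2 : Real.log (N₁ v / N₀ v) ≤ A := le_csSup hSAbdd ⟨v, hv, rfl⟩
        have h3 : Real.log (N₁ v / N₀ v) ≤ max A B := by linarith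
        rw [Real.log_le_iff_le_exp (hratio v hv), div_le_iff₀ (hpos₀ v hv)] at h3
        linarith
  · rintro C ⟨hC0, hC1, hC2⟩
    rw [hdval]
    refine max_le (csSup_le hSAne ?_) (csSup_le hSBne ?_)
    · rintro x ⟨v, hv, rfl⟩
      rw [Real.log_le_iff_le_exp (hratio v hv), div_le_iff₀ (hpos₀ v hv)]
      exact hC2 v
    · rintro x ⟨v, hv, rfl⟩
      have h3 : Real.log (N₀ v / N₁ v) ≤ C := by
        rw [Real.log_le_iff_le_exp (div_pos (hpos₀ v hv) (hpos₁ v hv)),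
          div_le_iff₀ (hpos₁ v hv)]
        exact hC1 v
      have hlog : Real.log (N₀ v / N₁ v) = -Real.log (N₁ v / N₀ v) := by
        rw [← inv_div, Real.log_inv]
      linarith [hlog ▸ h3]


end
end

section
/- Let A = ⊕_{k≥0} A_k be a graded commutative ℂ-algebra with each graded piece A_k finite-dimensional, N = (N_k)_k a submultiplicative graded norm on A, and 𝓕 a submultiplicative graded filtration on A. Then the ray of norms N_t^𝓕 (t ≥ 0) emanating from N and associated with 𝓕 via the envelope formula on each graded piece is submultiplicative: for every t ≥ 0, k, l ≥ 0, f ∈ A_k and g ∈ A_l, one has ‖f·g‖_t^𝓕 ≤ ‖f‖_t^𝓕 · ‖g‖_t^𝓕. -/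
open scoped BigOperators
open Filter Classical

noncomputable section

variable {V : Type*} [AddCommGroup V] [Module ℂ V]

/-- A filtration of a subspace `W` of `A`. -/
structure IsFiltrationOn {A : Type*} [AddCommGroup A] [Module ℂ A]
    (W : Submodule ℂ A) (F : ℝ → Submodule ℂ A) : Prop where
  le : ∀ t : ℝ, F t ≤ W
  antitone : ∀ ⦃s t : ℝ⦄, s ≤ t → F t ≤ F s
  left_cont : ∀ t : ℝ, ∃ ε > 0, ∀ δ : ℝ, 0 < δ → δ < ε → F (t - δ) = F t
  eventually_top : ∃ t₀ : ℝ, ∀ t ≤ t₀, F t = W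
  eventually_bot : ∃ t₁ : ℝ, ∀ t, t₁ ≤ t → F t = ⊥

/-- `N` is a norm on the subspace `W`. -/
structure IsNormOn {A : Type*} [AddCommGroup A] [Module ℂ A]
    (W : Submodule ℂ A) (N : A → ℝ) : Prop where
  eq_zero_iff : ∀ f ∈ W, (N f = 0 ↔ f = 0)
  smul : ∀ (a : ℂ), ∀ f ∈ W, N (a • f) = ‖a‖ * N f
  add_le : ∀ f ∈ W, ∀ g ∈ W, N (f + g) ≤ N f + N g

/-- The envelope ray of norms on a graded piece `W`: decompositions are taken inside `W`. -/
def envRayOn {A : Type*} [AddCommGroup A] [Module ℂ A]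
    (W : Submodule ℂ A) (F : ℝ → Submodule ℂ A) (N : A → ℝ) (t : ℝ) (f : A) : ℝ :=
  sInf {r : ℝ | ∃ (m : ℕ) (g : Fin m → A), (∀ i, g i ∈ W) ∧ f = ∑ i, g i ∧
    r = ∑ i, N (g i) * filtChi F (g i) ^ t}

lemma IsNormOn.zero' {A : Type*} [AddCommGroup A] [Module ℂ A]
    {W : Submodule ℂ A} {N : A → ℝ} (hN : IsNormOn W N) : N 0 = 0 := by
  have := hN.smul 0 0 W.zero_mem
  simpa using this

lemma IsNormOn.nonneg' {A : Type*} [AddCommGroup A] [Module ℂ A]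
    {W : Submodule ℂ A} {N : A → ℝ} (hN : IsNormOn W N)
    {f : A} (hf : f ∈ W) : 0 ≤ N f := by
  have hneg : N (-f) = N f := by
    have := hN.smul (-1) f hf
    simpa using this
  have h2 := hN.add_le f hf (-f) (W.neg_mem hf)
  rw [add_neg_cancel, hN.zero', hneg] at h2
  linarith

lemma filtChi_nonneg' {A : Type*} [AddCommGroup A] [Module ℂ A]
    (F : ℝ → Submodule ℂ A) (f : A) : 0 ≤ filtChi F f := by
  unfold filtChi
  split_ifs
  · exact le_refl 0
  · exact (Real.exp_pos _).le

lemma mem_of_lt_filtWeight' {A : Type*} [AddCommGroup A] [Module ℂ A]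
    {W : Submodule ℂ A} {F : ℝ → Submodule ℂ A} (hF : IsFiltrationOn W F)
    {f : A} (hf : f ∈ W) {a : ℝ} (ha : a < filtWeight F f) : f ∈ F a := by
  obtain ⟨t₀, ht₀⟩ := hF.eventually_top
  have hne : {l : ℝ | f ∈ F l}.Nonempty :=
    ⟨min t₀ a, by rw [Set.mem_setOf_eq, ht₀ _ (min_le_left _ _)]; exact hf⟩
  obtain ⟨l, hl, hal⟩ := exists_lt_of_lt_csSup hne ha
  exact hF.antitone hal.le hl

lemma filtWeight_bddAbove' {A : Type*} [AddCommGroup A] [Module ℂ A]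
    {W : Submodule ℂ A} {F : ℝ → Submodule ℂ A} (hF : IsFiltrationOn W F)
    {f : A} (hf0 : f ≠ 0) : BddAbove {l : ℝ | f ∈ F l} := by
  obtain ⟨t₁, ht₁⟩ := hF.eventually_bot
  refine ⟨t₁, fun s hs => ?_⟩
  by_contra hst
  push_neg at hst
  have : f ∈ F s := hs
  rw [ht₁ s hst.le] at this
  exact hf0 (Submodule.mem_bot ℂ |>.mp this)

lemma filtChi_mul_le' {A : Type*} [CommRing A] [Algebra ℂ A]
    {W₁ W₂ W₃ : Submodule ℂ A} {F₁ F₂ F₃ : ℝ → Submodule ℂ A}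
    (h₁ : IsFiltrationOn W₁ F₁) (h₂ : IsFiltrationOn W₂ F₂) (h₃ : IsFiltrationOn W₃ F₃)
    (hmul : ∀ s t : ℝ, ∀ f ∈ F₁ s, ∀ g ∈ F₂ t, f * g ∈ F₃ (s + t))
    {f g : A} (hf : f ∈ W₁) (hg : g ∈ W₂) :
    filtChi F₃ (f * g) ≤ filtChi F₁ f * filtChi F₂ g := by
  by_cases hfg : f * g = 0
  · rw [filtChi, if_pos hfg]
    exact mul_nonneg (filtChi_nonneg' _ _) (filtChi_nonneg' _ _)
  · have hf0 : f ≠ 0 := fun h => hfg (by rw [h, zero_mul])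
    have hg0 : g ≠ 0 := fun h => hfg (by rw [h, mul_zero])
    have hw : filtWeight F₁ f + filtWeight F₂ g ≤ filtWeight F₃ (f * g) := by
      by_contra hlt
      push_neg at hlt
      set wf := filtWeight F₁ f
      set wg := filtWeight F₂ g
      set wp := filtWeight F₃ (f * g)
      set δ : ℝ := (wf + wg - wp) / 3 with hδ
      have hδpos : 0 < δ := by simp only [hδ]; linarith
      have hfa : f ∈ F₁ (wf - δ) := mem_of_lt_filtWeight' h₁ hf (by linarith)
      have hgb : g ∈ F₂ (wg - δ) := mem_of_lt_filtWeight' h₂ hg (by linarith)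
      have hab : f * g ∈ F₃ ((wf - δ) + (wg - δ)) := hmul _ _ f hfa g hgb
      have hle : (wf - δ) + (wg - δ) ≤ wp :=
        le_csSup (filtWeight_bddAbove' h₃ hfg) hab
      simp only [hδ] at hle
      linarith
    rw [filtChi, if_neg hfg, filtChi, if_neg hf0, filtChi, if_neg hg0, ← Real.exp_add,
      ← neg_add]
    exact Real.exp_le_exp.mpr (neg_le_neg hw)

/-- for a submultiplicative graded norm `N` and a submultiplicative graded
filtration `𝓕` on a graded commutative ℂ-algebra with finite-dimensional graded pieces,
the envelope ray of norms `N_t^𝓕` is submultiplicative for every `t ≥ 0`. -/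
theorem envRay_submultiplicative
    {A : Type*} [CommRing A] [Algebra ℂ A] (𝒜 : ℕ → Submodule ℂ A) [GradedAlgebra 𝒜]
    (hfd : ∀ k : ℕ, FiniteDimensional ℂ (𝒜 k))
    (N : ℕ → A → ℝ) (hN : ∀ k : ℕ, IsNormOn (𝒜 k) (N k))
    (hNsub : ∀ (k l : ℕ), ∀ f ∈ 𝒜 k, ∀ g ∈ 𝒜 l, N (k + l) (f * g) ≤ N k f * N l g)
    (F : ℕ → ℝ → Submodule ℂ A) (hF : ∀ k : ℕ, IsFiltrationOn (𝒜 k) (F k))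
    (hFsub : ∀ (k l : ℕ) (s t : ℝ), ∀ f ∈ F k s, ∀ g ∈ F l t, f * g ∈ F (k + l) (s + t)) :
    ∀ t : ℝ, 0 ≤ t → ∀ (k l : ℕ), ∀ f ∈ 𝒜 k, ∀ g ∈ 𝒜 l,
      envRayOn (𝒜 (k + l)) (F (k + l)) (N (k + l)) t (f * g) ≤
        envRayOn (𝒜 k) (F k) (N k) t f * envRayOn (𝒜 l) (F l) (N l) t g := by
  intro t ht k l f hf g hg
  set Sf : Set ℝ := {r : ℝ | ∃ (m : ℕ) (u : Fin m → A), (∀ i, u i ∈ 𝒜 k) ∧ f = ∑ i, u i ∧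
    r = ∑ i, N k (u i) * filtChi (F k) (u i) ^ t} with hSf
  set Sg : Set ℝ := {r : ℝ | ∃ (m : ℕ) (v : Fin m → A), (∀ i, v i ∈ 𝒜 l) ∧ g = ∑ i, v i ∧
    r = ∑ i, N l (v i) * filtChi (F l) (v i) ^ t} with hSg
  set Sfg : Set ℝ := {r : ℝ | ∃ (m : ℕ) (w : Fin m → A), (∀ i, w i ∈ 𝒜 (k + l)) ∧
    f * g = ∑ i, w i ∧
    r = ∑ i, N (k + l) (w i) * filtChi (F (k + l)) (w i) ^ t} with hSfg
  have hterm : ∀ (k' : ℕ) (h : A), h ∈ 𝒜 k' →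
      0 ≤ N k' h * filtChi (F k') h ^ t := fun k' h hh =>
    mul_nonneg ((hN k').nonneg' hh) (Real.rpow_nonneg (filtChi_nonneg' _ _) t)
  have hSf_nonneg : ∀ r ∈ Sf, (0:ℝ) ≤ r := by
    rintro r ⟨m, u, hu, -, rfl⟩
    exact Finset.sum_nonneg fun i _ => hterm k (u i) (hu i)
  have hSg_nonneg : ∀ r ∈ Sg, (0:ℝ) ≤ r := by
    rintro r ⟨m, v, hv, -, rfl⟩
    exact Finset.sum_nonneg fun i _ => hterm l (v i) (hv i)
  have hSfg_bdd : BddBelow Sfg := by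
    refine ⟨0, fun r hr => ?_⟩
    obtain ⟨m, w, hw, -, rfl⟩ := hr
    exact Finset.sum_nonneg fun i _ => hterm (k + l) (w i) (hw i)
  have hSf_ne : Sf.Nonempty :=
    ⟨N k f * filtChi (F k) f ^ t, 1, fun _ => f, fun _ => hf, by simp, by simp⟩
  have hSg_ne : Sg.Nonempty :=
    ⟨N l g * filtChi (F l) g ^ t, 1, fun _ => g, fun _ => hg, by simp, by simp⟩
  -- key step: for any decomposition values a,b, sInf Sfg ≤ a * b
  have key : ∀ a ∈ Sf, ∀ b ∈ Sg, sInf Sfg ≤ a * b := by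
    rintro a ⟨m, u, hu, hfu, rfl⟩ b ⟨n, v, hv, hgv, rfl⟩
    set w : Fin m × Fin n → A := fun p => u p.1 * v p.2 with hwdef
    set w' : Fin (m * n) → A := fun p => w (finProdFinEquiv.symm p) with hw'def
    have hsum' : ∀ (φ : A → ℝ), ∑ p : Fin (m * n), φ (w' p) = ∑ q : Fin m × Fin n, φ (w q) :=
      fun φ => Equiv.sum_comp finProdFinEquiv.symm (fun q => φ (w q))
    have hw'mem : ∀ p, w' p ∈ 𝒜 (k + l) := fun p =>
      SetLike.mul_mem_graded (hu _) (hv _)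
    have hdec : f * g = ∑ p : Fin (m * n), w' p := by
      have h1 : ∑ p : Fin (m * n), w' p = ∑ q : Fin m × Fin n, w q :=
        Equiv.sum_comp finProdFinEquiv.symm w
      rw [h1, hfu, hgv, Finset.sum_mul_sum, Fintype.sum_prod_type]
    have hmem : (∑ p : Fin (m * n),
        N (k + l) (w' p) * filtChi (F (k + l)) (w' p) ^ t) ∈ Sfg :=
      ⟨m * n, w', hw'mem, hdec, rfl⟩
    refine le_trans (csInf_le hSfg_bdd hmem) ?_
    rw [hsum' (fun x => N (k + l) x * filtChi (F (k + l)) x ^ t),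
      Finset.sum_mul_sum, Fintype.sum_prod_type]
    refine Finset.sum_le_sum fun i _ => Finset.sum_le_sum fun j _ => ?_
    -- termwise inequality
    have hNle : N (k + l) (u i * v j) ≤ N k (u i) * N l (v j) :=
      hNsub k l (u i) (hu i) (v j) (hv j)
    have hchile : filtChi (F (k + l)) (u i * v j) ≤
        filtChi (F k) (u i) * filtChi (F l) (v j) :=
      filtChi_mul_le' (hF k) (hF l) (hF (k + l))
        (fun s t' x hx y hy => hFsub k l s t' x hx y hy) (hu i) (hv j)
    have hrpow : filtChi (F (k + l)) (u i * v j) ^ t ≤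
        (filtChi (F k) (u i)) ^ t * (filtChi (F l) (v j)) ^ t := by
      rw [← Real.mul_rpow (filtChi_nonneg' _ _) (filtChi_nonneg' _ _)]
      exact Real.rpow_le_rpow (filtChi_nonneg' _ _) hchile ht
    calc N (k + l) (w (i, j)) * filtChi (F (k + l)) (w (i, j)) ^ t
        ≤ (N k (u i) * N l (v j)) *
          ((filtChi (F k) (u i)) ^ t * (filtChi (F l) (v j)) ^ t) := by
          refine mul_le_mul hNle hrpow (Real.rpow_nonneg (filtChi_nonneg' _ _) t) ?_
          exact mul_nonneg ((hN k).nonneg' (hu i)) ((hN l).nonneg' (hv j))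
      _ = (N k (u i) * filtChi (F k) (u i) ^ t) *
          (N l (v j) * filtChi (F l) (v j) ^ t) := by ring
  -- combine
  have haf : (0:ℝ) ≤ sInf Sf := le_csInf hSf_ne hSf_nonneg
  have hbg : (0:ℝ) ≤ sInf Sg := le_csInf hSg_ne hSg_nonneg
  have step1 : ∀ b ∈ Sg, sInf Sfg ≤ sInf Sf * b := by
    intro b hb
    have hb0 : 0 ≤ b := hSg_nonneg b hb
    rcases eq_or_lt_of_le hb0 with hb0' | hb0'
    · obtain ⟨a, ha⟩ := hSf_ne
      have := key a ha b hb
      rw [← hb0', mul_zero] at this ⊢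
      exact this
    · rw [← div_le_iff₀ hb0']
      exact le_csInf hSf_ne fun a ha => (div_le_iff₀ hb0').mpr (key a ha b hb)
  show sInf Sfg ≤ sInf Sf * sInf Sg
  rcases eq_or_lt_of_le haf with ha0' | ha0'
  · obtain ⟨b, hb⟩ := hSg_ne
    have h2 := step1 b hb
    rw [← ha0', zero_mul] at h2 ⊢
    exact h2
  · rw [mul_comm, ← div_le_iff₀ ha0']
    exact le_csInf hSg_ne fun b hb => (div_le_iff₀ ha0').mpr
      (by rw [mul_comm]; exact step1 b hb)

end
end

section
/- Let A = ⊕_{k≥0} A_k be a graded commutative ℂ-algebra with each graded piece A_k finite-dimensional, N = (N_k)_k a submultiplicative graded norm on A, and 𝓕 a submultiplicative graded filtration on A. For homogeneous f ∈ A_k, let χ_𝓕^{hom}(f) := lim_{m→∞} χ_𝓕(f^m)^{1/m} (this limit exists by submultiplicativity of χ_𝓕 and Fekete's lemma), and define the homogenized ray ‖f‖_t^{𝓕,hom} := inf{ Σ_i ‖f_i‖ · (χ_𝓕^{hom}(f_i))^t : f = Σ_i f_i, f_i ∈ A_k }. Then for every t ≥ 0 and every homogeneous f ∈ A_k, lim_{m→∞}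 (‖f^m‖_t^𝓕)^{1/m} ≤ ‖f‖_t^{𝓕,hom} ≤ ‖f‖_t^𝓕, where the limit on the left exists by submultiplicativity of the ray norms N_t^𝓕 and Fekete's lemma. -/
open scoped BigOperators
open Filter Classical

noncomputable section

variable {V : Type*} [AddCommGroup V] [Module ℂ V]

/-- The homogenized non-Archimedean norm
`χ_𝓕^{hom}(f) := lim_{m→∞} χ_𝓕(f^m)^{1/m}` for `f` in the `k`-th graded piece. -/
noncomputable def chiHom {A : Type*} [CommRing A] [Algebra ℂ A]
    (F : ℕ → ℝ → Submodule ℂ A) (k : ℕ) (f : A) : ℝ :=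
  limUnder Filter.atTop (fun m : ℕ => filtChi (F (m * k)) (f ^ m) ^ ((1 : ℝ) / m))

/-- The homogenized envelope ray on a graded piece `W`. -/
noncomputable def envRayHom {A : Type*} [CommRing A] [Algebra ℂ A]
    (W : Submodule ℂ A) (F : ℕ → ℝ → Submodule ℂ A) (k : ℕ) (N : A → ℝ) (t : ℝ) (f : A) : ℝ :=
  sInf {r : ℝ | ∃ (m : ℕ) (g : Fin m → A), (∀ i, g i ∈ W) ∧ f = ∑ i, g i ∧
    r = ∑ i, N (g i) * chiHom F k (g i) ^ t}



lemma fekete_pow_le {u : ℕ → ℝ} (usub : ∀ m n, 1 ≤ m → 1 ≤ n → u (m + n) ≤ u m + u n)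
    {p : ℕ} (hp : 1 ≤ p) : ∀ q, 1 ≤ q → u (p * q) ≤ q * u p := by
  intro q hq
  induction q with
  | zero => omega
  | succ q ih =>
    rcases Nat.eq_or_lt_of_le hq with h | h
    · simp [← h]
    · have hq1 : 1 ≤ q := by omega
      have := usub (p * q) p (Nat.mul_pos (by omega) (by omega)) hp
      have h2 := ih hq1
      have : u (p * (q + 1)) ≤ q * u p + u p := by
        rw [mul_add, mul_one]; linarith
      push_cast
      linarith

lemma fekete_eventually {b : ℕ → ℝ} (hb0 : ∀ m, 1 ≤ m → 0 ≤ b m)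
    (hsub : ∀ m n, 1 ≤ m → 1 ≤ n → b (m + n) ≤ b m * b n)
    {p : ℕ} (hp : 1 ≤ p) {ε : ℝ} (hε : 0 < ε) :
    ∀ᶠ m : ℕ in atTop, b m ^ ((1 : ℝ) / m) ≤ b p ^ ((1 : ℝ) / p) + ε := by
  by_cases hzero : ∃ r, 1 ≤ r ∧ b r = 0
  · obtain ⟨r, hr1, hr0⟩ := hzero
    filter_upwards [eventually_gt_atTop r] with m hm
    have hm1 : 1 ≤ m := by omega
    have hbm : b m = 0 := by
      have h1 : b m ≤ b r * b (m - r) := by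
        have := hsub r (m - r) hr1 (by omega)
        rwa [Nat.add_sub_cancel' hm.le] at this
      rw [hr0, zero_mul] at h1
      exact le_antisymm h1 (hb0 m hm1)
    rw [hbm, Real.zero_rpow (one_div_ne_zero (Nat.cast_ne_zero.2 (by omega)))]
    exact add_nonneg (Real.rpow_nonneg (hb0 p hp) _) hε.le
  · push_neg at hzero
    have hbpos : ∀ m, 1 ≤ m → 0 < b m := fun m hm => (hb0 m hm).lt_of_ne' (hzero m hm)
    set u : ℕ → ℝ := fun m => Real.log (b m) with hu
    have usub : ∀ m n, 1 ≤ m → 1 ≤ n → u (m + n) ≤ u m + u n := by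
      intro m n hm hn
      have h1 : Real.log (b (m + n)) ≤ Real.log (b m * b n) :=
        Real.log_le_log (hbpos _ (by omega)) (hsub m n hm hn)
      rwa [Real.log_mul (hbpos m hm).ne' (hbpos n hn).ne'] at h1
    set C : ℝ := ∑ r ∈ Finset.range p, |u r| with hC
    have hC0 : 0 ≤ C := Finset.sum_nonneg fun _ _ => abs_nonneg _
    -- key linear bound
    have key : ∀ m, p ≤ m → u m / m ≤ u p / p + (|u p| + C) / m := by
      intro m hm
      have hm1 : 1 ≤ m := le_trans hp hm
      set q := m / p with hq
      set r := m % p with hr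
      have hq1 : 1 ≤ q := Nat.one_le_div_iff (by omega) |>.2 hm
      have hmeq : p * q + r = m := Nat.div_add_mod m p
      have hrp : r < p := Nat.mod_lt m (by omega)
      have h1 : u m ≤ q * u p + C := by
        rcases Nat.eq_zero_or_pos r with h | h
        · have : u (p * q) ≤ q * u p := fekete_pow_le usub hp q hq1
          have hm' : m = p * q := by omega
          rw [hm']
          linarith
        · have h2 : u (p * q + r) ≤ u (p * q) + u r :=
            usub _ _ (Nat.mul_pos (by omega) (by omega)) h
          have h3 : u (p * q) ≤ q * u p := fekete_pow_le usub hp q hq1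
          have h4 : u r ≤ C := by
            calc u r ≤ |u r| := le_abs_self _
              _ ≤ C := Finset.single_le_sum (f := fun i => |u i|)
                (fun _ _ => abs_nonneg _) (Finset.mem_range.2 hrp)
          rw [← hmeq]
          linarith
      have hmp : (0:ℝ) < m := by exact_mod_cast (by omega : 0 < m)
      have hpp : (0:ℝ) < p := by exact_mod_cast hp
      rw [div_add_div _ _ (ne_of_gt hpp) (ne_of_gt hmp), div_le_div_iff₀ hmp (by positivity)]
      have hqm : (q : ℝ) * p = (m : ℝ) - r := by
        have h : (p : ℝ) * q + r = m := by exact_mod_cast hmeq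
        linarith [h, mul_comm (q:ℝ) (p:ℝ)]
      have hrle : (r : ℝ) ≤ p := by exact_mod_cast hrp.le
      have hr0' : (0:ℝ) ≤ r := Nat.cast_nonneg r
      have habs : -((r:ℝ) * u p) ≤ (r:ℝ) * |u p| := by
        have := neg_abs_le (u p)
        nlinarith [abs_nonneg (u p)]
      have hpabs : (r:ℝ) * |u p| ≤ (p:ℝ) * |u p| := by
        exact mul_le_mul_of_nonneg_right hrle (abs_nonneg _)
      have h1'' : u m * p ≤ ((m:ℝ) - r) * u p + C * p := by
        have hmul := mul_le_mul_of_nonneg_right h1 hpp.le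
        have heq : ((q:ℝ) * u p + C) * p = ((m:ℝ) - r) * u p + C * p := by
          rw [← hqm]; ring
        linarith
      have hD := mul_le_mul_of_nonneg_right h1'' hmp.le
      have hA := mul_le_mul_of_nonneg_right habs hmp.le
      have hB := mul_le_mul_of_nonneg_right hpabs hmp.le
      nlinarith [hD, hA, hB]
    -- convert to the rpow statement
    set x : ℝ := u p / p with hx
    set ε' : ℝ := Real.log (1 + ε / Real.exp x) with hε'
    have hepos : 0 < ε / Real.exp x := div_pos hε (Real.exp_pos x)
    have hε'pos : 0 < ε' := Real.log_pos (by linarith)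
    have hexp : Real.exp (x + ε') = Real.exp x + ε := by
      rw [Real.exp_add, hε', Real.exp_log (by linarith), mul_add, mul_one,
        mul_div_cancel₀ _ (Real.exp_pos x).ne']
    have hlim : Tendsto (fun m : ℕ => (|u p| + C) / m) atTop (nhds 0) :=
      tendsto_const_div_atTop_nhds_zero_nat _
    have hev : ∀ᶠ m : ℕ in atTop, (|u p| + C) / m ≤ ε' :=
      (hlim.eventually_le_const hε'pos)
    filter_upwards [hev, eventually_ge_atTop p, eventually_ge_atTop 1] with m h1 h2 h3
    have hbm := hbpos m h3
    have hbp := hbpos p hp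
    have e1 : b m ^ ((1:ℝ)/m) = Real.exp (u m / m) := by
      rw [Real.rpow_def_of_pos hbm, one_div, mul_comm, ← div_eq_inv_mul]
    have e2 : b p ^ ((1:ℝ)/p) = Real.exp (u p / p) := by
      rw [Real.rpow_def_of_pos hbp, one_div, mul_comm, ← div_eq_inv_mul]
    rw [e1, e2, ← hx, ← hexp]
    apply Real.exp_le_exp.2
    have := key m h2
    linarith

lemma fekete_tendsto {b : ℕ → ℝ} (hb0 : ∀ m, 1 ≤ m → 0 ≤ b m)
    (hsub : ∀ m n, 1 ≤ m → 1 ≤ n → b (m + n) ≤ b m * b n) :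
    ∃ I : ℝ, 0 ≤ I ∧
      Tendsto (fun m : ℕ => b m ^ ((1 : ℝ) / m)) atTop (nhds I) ∧
      ∀ p, 1 ≤ p → I ≤ b p ^ ((1 : ℝ) / p) := by
  set c : ℕ → ℝ := fun m => b m ^ ((1 : ℝ) / m) with hc
  set S : Set ℝ := Set.range (fun j : ℕ => c (j + 1)) with hS
  have hSne : S.Nonempty := ⟨c 1, ⟨0, rfl⟩⟩
  have hSbd : BddBelow S := by
    refine ⟨0, fun x hx => ?_⟩
    obtain ⟨j, rfl⟩ := hx
    exact Real.rpow_nonneg (hb0 _ (by omega)) _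
  set I : ℝ := sInf S with hI
  have hI0 : 0 ≤ I := le_csInf hSne fun x hx => by
    obtain ⟨j, rfl⟩ := hx; exact Real.rpow_nonneg (hb0 _ (by omega)) _
  have hIle : ∀ p, 1 ≤ p → I ≤ c p := by
    intro p hp
    have : c p ∈ S := ⟨p - 1, by simp [Nat.sub_add_cancel hp]⟩
    exact csInf_le hSbd this
  refine ⟨I, hI0, ?_, hIle⟩
  rw [Metric.tendsto_atTop]
  intro ε hε
  have h1 : I < I + ε / 2 := by linarith
  obtain ⟨x, hxS, hxlt⟩ := exists_lt_of_csInf_lt hSne h1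
  obtain ⟨j, rfl⟩ := hxS
  have hev := fekete_eventually hb0 hsub (p := j + 1) (by omega) (show (0:ℝ) < ε/2 by linarith)
  obtain ⟨M, hM⟩ := eventually_atTop.1 (hev.and (eventually_ge_atTop 1))
  refine ⟨M, fun m hm => ?_⟩
  obtain ⟨hup, hm1⟩ := hM m hm
  rw [Real.dist_eq, abs_lt]
  constructor
  · have := hIle m hm1
    simp only [hc] at this ⊢
    linarith
  · have : c m ≤ c (j + 1) + ε / 2 := hup
    simp only [hc] at this hxlt ⊢
    linarith

section MyHelpers

lemma my_one_le_prod {ι : Type*} (s : Finset ι) (f : ι → ℝ) (h : ∀ i ∈ s, 1 ≤ f i) :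
    1 ≤ ∏ i ∈ s, f i := by
  calc (1:ℝ) = ∏ _i ∈ s, 1 := by simp
    _ ≤ ∏ i ∈ s, f i := Finset.prod_le_prod (by simp) h

lemma my_prod_le_prod_subset {ι : Type*} (s t : Finset ι) (hst : s ⊆ t) (f : ι → ℝ)
    (h1 : ∀ i ∈ t, 1 ≤ f i) : ∏ i ∈ s, f i ≤ ∏ i ∈ t, f i := by
  rw [← Finset.prod_sdiff hst]
  refine le_mul_of_one_le_left ?_ ?_
  · exact Finset.prod_nonneg fun i hi => le_trans zero_le_one (h1 i (hst hi))
  · exact my_one_le_prod _ _ fun i hi => h1 i (Finset.mem_sdiff.1 hi).1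

lemma my_filtChi_nonneg {V : Type*} [AddCommGroup V] [Module ℂ V]
    (F : ℝ → Submodule ℂ V) (s : V) : 0 ≤ filtChi F s := by
  unfold filtChi; split
  · exact le_rfl
  · exact (Real.exp_pos _).le

variable {A : Type*} [CommRing A] [Algebra ℂ A]

lemma my_weight_set_nonempty {W : Submodule ℂ A} {F : ℝ → Submodule ℂ A}
    (hF : IsFiltrationOn W F) {s : A} (hs : s ∈ W) : {l : ℝ | s ∈ F l}.Nonempty := by
  obtain ⟨t₀, h⟩ := hF.eventually_top
  exact ⟨t₀, by simpa [h t₀ le_rfl] using hs⟩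

lemma my_weight_set_bddAbove {W : Submodule ℂ A} {F : ℝ → Submodule ℂ A}
    (hF : IsFiltrationOn W F) {s : A} (h0 : s ≠ 0) : BddAbove {l : ℝ | s ∈ F l} := by
  obtain ⟨t₁, h⟩ := hF.eventually_bot
  refine ⟨t₁, fun l hl => ?_⟩
  by_contra hlt
  push_neg at hlt
  have : F l = ⊥ := h l hlt.le
  exact h0 (by simpa [this] using hl)

lemma my_mem_filtWeight {W : Submodule ℂ A} {F : ℝ → Submodule ℂ A}
    (hF : IsFiltrationOn W F) {s : A} (hs : s ∈ W) :
    s ∈ F (filtWeight F s) := by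
  set w := filtWeight F s with hw
  obtain ⟨ε, hε, hcont⟩ := hF.left_cont w
  have h1 : w - ε / 2 < w := by linarith
  obtain ⟨l, hl, hl2⟩ := exists_lt_of_lt_csSup (my_weight_set_nonempty hF hs) h1
  have : s ∈ F (w - ε / 2) := hF.antitone (le_of_lt hl2) hl
  rwa [hcont (ε / 2) (by linarith) (by linarith)] at this

lemma my_le_filtWeight {W : Submodule ℂ A} {F : ℝ → Submodule ℂ A}
    (hF : IsFiltrationOn W F) {s : A} (h0 : s ≠ 0) {l : ℝ}
    (hl : s ∈ F l) : l ≤ filtWeight F s :=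
  le_csSup (my_weight_set_bddAbove hF h0) hl

variable (𝒜 : ℕ → Submodule ℂ A) [GradedAlgebra 𝒜]

section chi
variable (F : ℕ → ℝ → Submodule ℂ A) (hF : ∀ k : ℕ, IsFiltrationOn (𝒜 k) (F k))
  (hFsub : ∀ (k l : ℕ) (s t : ℝ), ∀ f ∈ F k s, ∀ g ∈ F l t, f * g ∈ F (k + l) (s + t))
include hF hFsub

omit [GradedAlgebra 𝒜] in
lemma my_chi_mul_le {a b : ℕ} {u v : A} (hu : u ∈ 𝒜 a) (hv : v ∈ 𝒜 b) :
    filtChi (F (a + b)) (u * v) ≤ filtChi (F a) u * filtChi (F b) v := by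
  by_cases huv : u * v = 0
  · rw [huv]
    simp only [filtChi, if_pos rfl]
    exact mul_nonneg (my_filtChi_nonneg _ _) (my_filtChi_nonneg _ _)
  · have hu0 : u ≠ 0 := fun h => huv (by simp [h])
    have hv0 : v ≠ 0 := fun h => huv (by simp [h])
    have h1 : u ∈ F a (filtWeight (F a) u) := my_mem_filtWeight (hF a) hu
    have h2 : v ∈ F b (filtWeight (F b) v) := my_mem_filtWeight (hF b) hv
    have h3 : u * v ∈ F (a + b) (filtWeight (F a) u + filtWeight (F b) v) :=
      hFsub a b _ _ u h1 v h2
    have h4 : filtWeight (F a) u + filtWeight (F b) v ≤ filtWeight (F (a + b)) (u * v) :=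
      my_le_filtWeight (hF (a + b)) huv h3
    simp only [filtChi, if_neg huv, if_neg hu0, if_neg hv0, ← Real.exp_add]
    exact Real.exp_le_exp.2 (by linarith)

lemma my_chi_prod_le {ι : Type*} [DecidableEq ι] (s : Finset ι) (hne : s.Nonempty)
    (d : ι → ℕ) (v : ι → A) (hv : ∀ i ∈ s, v i ∈ 𝒜 (d i)) :
    filtChi (F (∑ i ∈ s, d i)) (∏ i ∈ s, v i) ≤ ∏ i ∈ s, filtChi (F (d i)) (v i) := by
  induction hne using Finset.Nonempty.cons_induction with
  | singleton i => simp
  | cons i s his hs ih =>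
    rw [Finset.prod_cons, Finset.prod_cons, Finset.sum_cons]
    calc filtChi (F (d i + ∑ j ∈ s, d j)) (v i * ∏ j ∈ s, v j)
        ≤ filtChi (F (d i)) (v i) * filtChi (F (∑ j ∈ s, d j)) (∏ j ∈ s, v j) := by
          refine my_chi_mul_le 𝒜 F hF hFsub (hv i (Finset.mem_cons_self i s)) ?_
          exact SetLike.prod_mem_graded 𝒜 d v (fun j hj => hv j (Finset.mem_cons_of_mem hj))
      _ ≤ _ := by
          refine mul_le_mul_of_nonneg_left ?_ (my_filtChi_nonneg _ _)
          exact ih (fun j hj => hv j (Finset.mem_cons_of_mem hj))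

lemma my_chi_pow_le {k' : ℕ} {x : A} (hx : x ∈ 𝒜 k') :
    ∀ a : ℕ, 1 ≤ a → filtChi (F (a * k')) (x ^ a) ≤ filtChi (F k') x ^ a := by
  intro a ha
  haveI : Nonempty (Fin a) := ⟨⟨0, by omega⟩⟩
  have := my_chi_prod_le 𝒜 F hF hFsub (Finset.univ : Finset (Fin a))
    Finset.univ_nonempty (fun _ => k') (fun _ => x) (fun _ _ => hx)
  simpa [Finset.prod_const, Finset.sum_const, Finset.card_univ, mul_comm] using this

end chi

section norm

lemma my_N_nonneg {W : Submodule ℂ A} {N : A → ℝ} (hN : IsNormOn W N) {f : A}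
    (hf : f ∈ W) : 0 ≤ N f := by
  have h0 : N 0 = 0 := (hN.eq_zero_iff 0 W.zero_mem).2 rfl
  have hneg : N (-f) = N f := by
    have := hN.smul (-1) f hf
    simpa using this
  have := hN.add_le f hf (-f) (W.neg_mem hf)
  simp only [add_neg_cancel, h0, hneg] at this
  linarith

variable (N : ℕ → A → ℝ) (hN : ∀ k : ℕ, IsNormOn (𝒜 k) (N k))
  (hNsub : ∀ (k l : ℕ), ∀ f ∈ 𝒜 k, ∀ g ∈ 𝒜 l, N (k + l) (f * g) ≤ N k f * N l g)

include hN hNsub in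
lemma my_N_prod_le {ι : Type*} (s : Finset ι) (hne : s.Nonempty)
    (d : ι → ℕ) (v : ι → A) (hv : ∀ i ∈ s, v i ∈ 𝒜 (d i)) :
    N (∑ i ∈ s, d i) (∏ i ∈ s, v i) ≤ ∏ i ∈ s, N (d i) (v i) := by
  induction hne using Finset.Nonempty.cons_induction with
  | singleton i => simp
  | cons i s his hs ih =>
    rw [Finset.prod_cons, Finset.prod_cons, Finset.sum_cons]
    have hmem : ∏ j ∈ s, v j ∈ 𝒜 (∑ j ∈ s, d j) :=
      SetLike.prod_mem_graded 𝒜 d v (fun j hj => hv j (Finset.mem_cons_of_mem hj))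
    calc N (d i + ∑ j ∈ s, d j) (v i * ∏ j ∈ s, v j)
        ≤ N (d i) (v i) * N (∑ j ∈ s, d j) (∏ j ∈ s, v j) :=
          hNsub _ _ _ (hv i (Finset.mem_cons_self i s)) _ hmem
      _ ≤ _ := by
          refine mul_le_mul_of_nonneg_left ?_
            (my_N_nonneg (hN (d i)) (hv i (Finset.mem_cons_self i s)))
          exact ih (fun j hj => hv j (Finset.mem_cons_of_mem hj))

end norm

section env

lemma my_envSet_lb {W : Submodule ℂ A} {F' : ℝ → Submodule ℂ A} {N' : A → ℝ}
    (hN' : IsNormOn W N') {t : ℝ} {f : A} :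
    ∀ r ∈ {r : ℝ | ∃ (m : ℕ) (g : Fin m → A), (∀ i, g i ∈ W) ∧ f = ∑ i, g i ∧
      r = ∑ i, N' (g i) * filtChi F' (g i) ^ t}, 0 ≤ r := by
  rintro r ⟨m, g, hg, hfg, rfl⟩
  refine Finset.sum_nonneg fun i _ => mul_nonneg (my_N_nonneg hN' (hg i)) ?_
  exact Real.rpow_nonneg (my_filtChi_nonneg _ _) _

lemma my_envRayOn_nonneg (W : Submodule ℂ A) (F' : ℝ → Submodule ℂ A) {N' : A → ℝ}
    (hN' : IsNormOn W N') (t : ℝ) (f : A) : 0 ≤ envRayOn W F' N' t f :=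
  Real.sInf_nonneg (my_envSet_lb hN')

lemma my_envRayOn_le {W : Submodule ℂ A} {F' : ℝ → Submodule ℂ A} {N' : A → ℝ}
    (hN' : IsNormOn W N') {t : ℝ} {f : A} {m : ℕ} (g : Fin m → A)
    (hg : ∀ i, g i ∈ W) (hfg : f = ∑ i, g i) :
    envRayOn W F' N' t f ≤ ∑ i, N' (g i) * filtChi F' (g i) ^ t :=
  csInf_le ⟨0, fun r hr => my_envSet_lb hN' r hr⟩ ⟨m, g, hg, hfg, rfl⟩

end env

end MyHelpers

section MyHelpers2
variable {A : Type*} [CommRing A] [Algebra ℂ A]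
variable (𝒜 : ℕ → Submodule ℂ A) [GradedAlgebra 𝒜]
  (N : ℕ → A → ℝ) (hN : ∀ k : ℕ, IsNormOn (𝒜 k) (N k))
  (hNsub : ∀ (k l : ℕ), ∀ f ∈ 𝒜 k, ∀ g ∈ 𝒜 l, N (k + l) (f * g) ≤ N k f * N l g)
  (F : ℕ → ℝ → Submodule ℂ A) (hF : ∀ k : ℕ, IsFiltrationOn (𝒜 k) (F k))
  (hFsub : ∀ (k l : ℕ) (s t : ℝ), ∀ f ∈ F k s, ∀ g ∈ F l t, f * g ∈ F (k + l) (s + t))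

include hN hNsub hF hFsub in
lemma my_env_submul {t : ℝ} (ht : 0 ≤ t) {a b : ℕ} {u v : A}
    (hu : u ∈ 𝒜 a) (hv : v ∈ 𝒜 b) :
    envRayOn (𝒜 (a + b)) (F (a + b)) (N (a + b)) t (u * v) ≤
      envRayOn (𝒜 a) (F a) (N a) t u * envRayOn (𝒜 b) (F b) (N b) t v := by
  set Sa := {r : ℝ | ∃ (m : ℕ) (g : Fin m → A), (∀ i, g i ∈ 𝒜 a) ∧ u = ∑ i, g i ∧
      r = ∑ i, N a (g i) * filtChi (F a) (g i) ^ t} with hSa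
  set Sb := {r : ℝ | ∃ (m : ℕ) (g : Fin m → A), (∀ i, g i ∈ 𝒜 b) ∧ v = ∑ i, g i ∧
      r = ∑ i, N b (g i) * filtChi (F b) (g i) ^ t} with hSb
  have hSane : Sa.Nonempty := ⟨_, 1, fun _ => u, fun _ => hu, by simp, rfl⟩
  have hSbne : Sb.Nonempty := ⟨_, 1, fun _ => v, fun _ => hv, by simp, rfl⟩
  -- claim C
  have claimC : ∀ r₁ ∈ Sa, ∀ r₂ ∈ Sb,
      envRayOn (𝒜 (a + b)) (F (a + b)) (N (a + b)) t (u * v) ≤ r₁ * r₂ := by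
    rintro r₁ ⟨m₁, g, hg, hug, rfl⟩ r₂ ⟨m₂, h, hh, hvh, rfl⟩
    classical
    set e : Fin m₁ × Fin m₂ ≃ Fin (m₁ * m₂) := finProdFinEquiv with he
    set G : Fin (m₁ * m₂) → A := fun i => g (e.symm i).1 * h (e.symm i).2 with hG
    have hGmem : ∀ i, G i ∈ 𝒜 (a + b) := fun i =>
      SetLike.mul_mem_graded (hg _) (hh _)
    have hGsum : u * v = ∑ i, G i := by
      show u * v = ∑ i, g (e.symm i).1 * h (e.symm i).2
      rw [Equiv.sum_comp e.symm (fun q : Fin m₁ × Fin m₂ => g q.1 * h q.2), hug, hvh,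
        Finset.sum_mul_sum, ← Fintype.sum_prod_type']
    have step1 : envRayOn (𝒜 (a + b)) (F (a + b)) (N (a + b)) t (u * v) ≤
        ∑ i, N (a + b) (G i) * filtChi (F (a + b)) (G i) ^ t :=
      my_envRayOn_le (hN (a + b)) G hGmem hGsum
    refine step1.trans ?_
    have hterm : ∀ q : Fin m₁ × Fin m₂,
        N (a + b) (g q.1 * h q.2) * filtChi (F (a + b)) (g q.1 * h q.2) ^ t ≤
        (N a (g q.1) * filtChi (F a) (g q.1) ^ t) *
        (N b (h q.2) * filtChi (F b) (h q.2) ^ t) := by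
      intro q
      have h1 : N (a + b) (g q.1 * h q.2) ≤ N a (g q.1) * N b (h q.2) :=
        hNsub a b _ (hg _) _ (hh _)
      have h2 : filtChi (F (a + b)) (g q.1 * h q.2) ^ t ≤
          (filtChi (F a) (g q.1) * filtChi (F b) (h q.2)) ^ t :=
        Real.rpow_le_rpow (my_filtChi_nonneg _ _)
          (my_chi_mul_le 𝒜 F hF hFsub (hg _) (hh _)) ht
      calc N (a + b) (g q.1 * h q.2) * filtChi (F (a + b)) (g q.1 * h q.2) ^ t
          ≤ (N a (g q.1) * N b (h q.2)) *
            ((filtChi (F a) (g q.1) * filtChi (F b) (h q.2)) ^ t) := by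
            refine mul_le_mul h1 h2 (Real.rpow_nonneg (my_filtChi_nonneg _ _) _) ?_
            exact mul_nonneg (my_N_nonneg (hN a) (hg _)) (my_N_nonneg (hN b) (hh _))
        _ = _ := by
            rw [Real.mul_rpow (my_filtChi_nonneg _ _) (my_filtChi_nonneg _ _)]
            ring
    calc ∑ i, N (a + b) (G i) * filtChi (F (a + b)) (G i) ^ t
        = ∑ q : Fin m₁ × Fin m₂,
            N (a + b) (g q.1 * h q.2) * filtChi (F (a + b)) (g q.1 * h q.2) ^ t :=
          Fintype.sum_equiv e.symm _ _ fun i => rfl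
      _ ≤ ∑ q : Fin m₁ × Fin m₂, (N a (g q.1) * filtChi (F a) (g q.1) ^ t) *
            (N b (h q.2) * filtChi (F b) (h q.2) ^ t) :=
          Finset.sum_le_sum fun q _ => hterm q
      _ = (∑ i, N a (g i) * filtChi (F a) (g i) ^ t) *
            (∑ j, N b (h j) * filtChi (F b) (h j) ^ t) := by
          rw [Finset.sum_mul_sum, ← Fintype.sum_prod_type']
  -- step 1: fix r₂, pass to inf over r₁
  have hSblb : ∀ r ∈ Sb, 0 ≤ r := fun r hr => my_envSet_lb (hN b) r hr
  have step1 : ∀ r₂ ∈ Sb,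
      envRayOn (𝒜 (a + b)) (F (a + b)) (N (a + b)) t (u * v) ≤
        envRayOn (𝒜 a) (F a) (N a) t u * r₂ := by
    intro r₂ hr₂
    have hr₂0 : 0 ≤ r₂ := hSblb r₂ hr₂
    rcases eq_or_lt_of_le hr₂0 with h | h
    · obtain ⟨r₁, hr₁⟩ := hSane
      have := claimC r₁ hr₁ r₂ hr₂
      rw [← h] at this ⊢
      simpa using this
    · refine le_of_forall_pos_le_add fun ε hε => ?_
      obtain ⟨r₁, hr₁, hlt⟩ := Real.lt_sInf_add_pos hSane (div_pos hε h)
      have h1 := claimC r₁ hr₁ r₂ hr₂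
      have h2 : r₁ * r₂ ≤ (envRayOn (𝒜 a) (F a) (N a) t u + ε / r₂) * r₂ :=
        mul_le_mul_of_nonneg_right (le_of_lt hlt) hr₂0
      have h3 : (envRayOn (𝒜 a) (F a) (N a) t u + ε / r₂) * r₂ =
          envRayOn (𝒜 a) (F a) (N a) t u * r₂ + ε := by
        field_simp
      linarith
  -- step 2
  have henva : 0 ≤ envRayOn (𝒜 a) (F a) (N a) t u := my_envRayOn_nonneg _ _ (hN a) _ _
  rcases eq_or_lt_of_le henva with h | h
  · obtain ⟨r₂, hr₂⟩ := hSbne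
    have := step1 r₂ hr₂
    rw [← h] at this ⊢
    simpa using this
  · refine le_of_forall_pos_le_add fun ε hε => ?_
    obtain ⟨r₂, hr₂, hlt⟩ := Real.lt_sInf_add_pos hSbne (div_pos hε h)
    have h1 := step1 r₂ hr₂
    have h2 : envRayOn (𝒜 a) (F a) (N a) t u * r₂ ≤
        envRayOn (𝒜 a) (F a) (N a) t u * (envRayOn (𝒜 b) (F b) (N b) t v + ε /
          envRayOn (𝒜 a) (F a) (N a) t u) :=
      mul_le_mul_of_nonneg_left (le_of_lt hlt) henva
    have h3 : envRayOn (𝒜 a) (F a) (N a) t u * (envRayOn (𝒜 b) (F b) (N b) t v + ε /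
          envRayOn (𝒜 a) (F a) (N a) t u) =
        envRayOn (𝒜 a) (F a) (N a) t u * envRayOn (𝒜 b) (F b) (N b) t v + ε := by
      field_simp
      try ring
    linarith

end MyHelpers2

/-- for every `t ≥ 0` and homogeneous `f ∈ A_k`, the limit
`lim_{m→∞} (‖f^m‖_t^𝓕)^{1/m}` exists and
`lim_{m→∞} (‖f^m‖_t^𝓕)^{1/m} ≤ ‖f‖_t^{𝓕,hom} ≤ ‖f‖_t^𝓕`; moreover the limits
`χ_𝓕^{hom}(g) = lim χ_𝓕(g^m)^{1/m}` exist for homogeneous `g`. -/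
theorem envRay_homogenization
    {A : Type*} [CommRing A] [Algebra ℂ A] (𝒜 : ℕ → Submodule ℂ A) [GradedAlgebra 𝒜]
    (hfd : ∀ k : ℕ, FiniteDimensional ℂ (𝒜 k))
    (N : ℕ → A → ℝ) (hN : ∀ k : ℕ, IsNormOn (𝒜 k) (N k))
    (hNsub : ∀ (k l : ℕ), ∀ f ∈ 𝒜 k, ∀ g ∈ 𝒜 l, N (k + l) (f * g) ≤ N k f * N l g)
    (F : ℕ → ℝ → Submodule ℂ A) (hF : ∀ k : ℕ, IsFiltrationOn (𝒜 k) (F k))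
    (hFsub : ∀ (k l : ℕ) (s t : ℝ), ∀ f ∈ F k s, ∀ g ∈ F l t, f * g ∈ F (k + l) (s + t)) :
    ∀ t : ℝ, 0 ≤ t → ∀ (k : ℕ), ∀ f ∈ 𝒜 k,
      Filter.Tendsto (fun m : ℕ => filtChi (F (m * k)) (f ^ m) ^ ((1 : ℝ) / m))
        Filter.atTop (nhds (chiHom F k f)) ∧
      (∃ L : ℝ,
        Filter.Tendsto
          (fun m : ℕ => envRayOn (𝒜 (m * k)) (F (m * k)) (N (m * k)) t (f ^ m) ^ ((1 : ℝ) / m))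
          Filter.atTop (nhds L) ∧
        L ≤ envRayHom (𝒜 k) F k (N k) t f) ∧
      envRayHom (𝒜 k) F k (N k) t f ≤ envRayOn (𝒜 k) (F k) (N k) t f := by
  intro t ht k f hf
  classical
  have hpowmem : ∀ (x : A), x ∈ 𝒜 k → ∀ m : ℕ, x ^ m ∈ 𝒜 (m * k) := by
    intro x hx m
    have := SetLike.pow_mem_graded m hx
    simpa [smul_eq_mul] using this
  -- part (i), for arbitrary homogeneous g of degree k
  have chiTendsto : ∀ g ∈ 𝒜 k,
      Filter.Tendsto (fun m : ℕ => filtChi (F (m * k)) (g ^ m) ^ ((1 : ℝ) / m))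
        Filter.atTop (nhds (chiHom F k g)) ∧ 0 ≤ chiHom F k g ∧
        chiHom F k g ≤ filtChi (F k) g := by
    intro g hg
    have hb0 : ∀ m, 1 ≤ m → 0 ≤ filtChi (F (m * k)) (g ^ m) := fun m _ =>
      my_filtChi_nonneg _ _
    have hsub : ∀ m n, 1 ≤ m → 1 ≤ n →
        filtChi (F ((m + n) * k)) (g ^ (m + n)) ≤
          filtChi (F (m * k)) (g ^ m) * filtChi (F (n * k)) (g ^ n) := by
      intro m n _ _
      have hgr : (m + n) * k = m * k + n * k := add_mul m n k
      rw [hgr, pow_add]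
      exact my_chi_mul_le 𝒜 F hF hFsub (hpowmem g hg m) (hpowmem g hg n)
    obtain ⟨I, hI0, hIT, hIle⟩ := fekete_tendsto hb0 hsub
    have hlim : chiHom F k g = I := by
      unfold chiHom
      exact hIT.limUnder_eq
    rw [hlim]
    refine ⟨hIT, hI0, ?_⟩
    have := hIle 1 le_rfl
    simpa using this
  obtain ⟨hchi_f, -, -⟩ := chiTendsto f hf
  -- the envelope sequence
  set b : ℕ → ℝ := fun m => envRayOn (𝒜 (m * k)) (F (m * k)) (N (m * k)) t (f ^ m) with hb
  have hb0 : ∀ m, 1 ≤ m → 0 ≤ b m := fun m _ => my_envRayOn_nonneg _ _ (hN _) _ _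
  have hbsub : ∀ m n, 1 ≤ m → 1 ≤ n → b (m + n) ≤ b m * b n := by
    intro m n _ _
    have hgr : (m + n) * k = m * k + n * k := add_mul m n k
    show envRayOn (𝒜 ((m + n) * k)) (F ((m + n) * k)) (N ((m + n) * k)) t (f ^ (m + n)) ≤ _
    rw [hgr, pow_add]
    exact my_env_submul 𝒜 N hN hNsub F hF hFsub ht (hpowmem f hf m) (hpowmem f hf n)
  obtain ⟨L, hL0, hLT, hLle⟩ := fekete_tendsto hb0 hbsub
  have hHomNe : {r : ℝ | ∃ (m : ℕ) (g : Fin m → A), (∀ i, g i ∈ 𝒜 k) ∧ f = ∑ i, g i ∧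
      r = ∑ i, N k (g i) * chiHom F k (g i) ^ t}.Nonempty :=
    ⟨_, 1, fun _ => f, fun _ => hf, by simp, rfl⟩
  refine ⟨hchi_f, ⟨L, hLT, ?_⟩, ?_⟩
  · -- L ≤ envRayHom
    refine le_csInf hHomNe ?_
    rintro r ⟨n, g, hg, hfg, rfl⟩
    set c : Fin n → ℝ := fun i => chiHom F k (g i) with hc
    have hc0 : ∀ i, 0 ≤ c i := fun i => (chiTendsto (g i) (hg i)).2.1
    -- main claim : for every ε > 0, L ≤ ∑ᵢ N (gᵢ) (cᵢ + ε)^t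
    have main : ∀ ε : ℝ, 0 < ε → L ≤ ∑ i, N k (g i) * (c i + ε) ^ t := by
      intro ε hε
      have hcε : ∀ i, 0 < c i + ε := fun i => add_pos_of_nonneg_of_pos (hc0 i) hε
      -- choose p
      have hev : ∀ᶠ p : ℕ in Filter.atTop, ∀ i,
          filtChi (F (p * k)) (g i ^ p) ^ ((1 : ℝ) / p) ≤ c i + ε := by
        rw [Filter.eventually_all]
        intro i
        exact ((chiTendsto (g i) (hg i)).1).eventually_le_const
          (lt_add_of_pos_right _ hε)
      obtain ⟨p, hp1, hpchi⟩ := ((Filter.eventually_ge_atTop 1).and hev).exists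
      have hp0' : (p : ℝ) ≠ 0 := Nat.cast_ne_zero.2 (by omega)
      have hchip : ∀ i, filtChi (F (p * k)) (g i ^ p) ≤ (c i + ε) ^ p := by
        intro i
        have h2 : (filtChi (F (p * k)) (g i ^ p) ^ ((1 : ℝ) / p)) ^ p ≤ (c i + ε) ^ p :=
          pow_le_pow_left₀ (Real.rpow_nonneg (my_filtChi_nonneg _ _) _) (hpchi i) p
        rwa [← Real.rpow_natCast (filtChi (F (p * k)) (g i ^ p) ^ ((1 : ℝ) / p)) p,
          ← Real.rpow_mul (my_filtChi_nonneg _ _), one_div,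
          inv_mul_cancel₀ hp0', Real.rpow_one] at h2
      set Mi : Fin n → ℝ := fun i => max 1 (filtChi (F k) (g i) / (c i + ε)) ^ p with hMi
      have hMi1 : ∀ i, 1 ≤ Mi i := fun i => one_le_pow₀ (le_max_left _ _)
      set M : ℝ := ∏ i, Mi i with hM
      have hM1 : 1 ≤ M := my_one_le_prod _ _ fun i _ => hMi1 i
      -- claim A
      have claimA : ∀ (i : Fin n) (α : ℕ), 1 ≤ α →
          filtChi (F (α * k)) (g i ^ α) ≤ (c i + ε) ^ α * Mi i := by
        intro i α hα
        have hratio : filtChi (F k) (g i) ≤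
            (c i + ε) * max 1 (filtChi (F k) (g i) / (c i + ε)) := by
          calc filtChi (F k) (g i)
              = filtChi (F k) (g i) / (c i + ε) * (c i + ε) :=
                (div_mul_cancel₀ _ (hcε i).ne').symm
            _ ≤ max 1 (filtChi (F k) (g i) / (c i + ε)) * (c i + ε) :=
                mul_le_mul_of_nonneg_right (le_max_right _ _) (hcε i).le
            _ = (c i + ε) * max 1 (filtChi (F k) (g i) / (c i + ε)) := mul_comm _ _
        have hchir : ∀ r' : ℕ, r' ≤ p →
            filtChi (F k) (g i) ^ r' ≤ (c i + ε) ^ r' * Mi i := by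
          intro r' hr'
          calc filtChi (F k) (g i) ^ r'
              ≤ ((c i + ε) * max 1 (filtChi (F k) (g i) / (c i + ε))) ^ r' :=
                pow_le_pow_left₀ (my_filtChi_nonneg _ _) hratio r'
            _ = (c i + ε) ^ r' * max 1 (filtChi (F k) (g i) / (c i + ε)) ^ r' := mul_pow _ _ _
            _ ≤ (c i + ε) ^ r' * Mi i := by
                refine mul_le_mul_of_nonneg_left ?_ (pow_nonneg (hcε i).le r')
                exact pow_le_pow_right₀ (le_max_left _ _) hr'
        set q := α / p with hqd
        set s := α % p with hsd
        have hmeq : p * q + s = α := Nat.div_add_mod α p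
        have hsp : s < p := Nat.mod_lt _ (by omega)
        rcases Nat.eq_zero_or_pos q with hq0 | hq1
        · have hαs : α = s := by rw [hq0, mul_zero, zero_add] at hmeq; exact hmeq.symm
          have h1 : filtChi (F (α * k)) (g i ^ α) ≤ filtChi (F k) (g i) ^ α :=
            my_chi_pow_le 𝒜 F hF hFsub (hg i) α hα
          exact h1.trans (by rw [hαs]; exact hchir s hsp.le)
        · have hpq : filtChi (F ((p * q) * k)) (g i ^ (p * q)) ≤ (c i + ε) ^ (p * q) := by
            have h1 : filtChi (F (q * (p * k))) ((g i ^ p) ^ q) ≤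
                filtChi (F (p * k)) (g i ^ p) ^ q :=
              my_chi_pow_le 𝒜 F hF hFsub (hpowmem (g i) (hg i) p) q hq1
            have h2 : filtChi (F (p * k)) (g i ^ p) ^ q ≤ ((c i + ε) ^ p) ^ q :=
              pow_le_pow_left₀ (my_filtChi_nonneg _ _) (hchip i) q
            have hgr : q * (p * k) = (p * q) * k := by ring
            have hpow : (g i ^ p) ^ q = g i ^ (p * q) := by rw [← pow_mul]
            rw [hgr, hpow] at h1
            calc filtChi (F ((p * q) * k)) (g i ^ (p * q))
                ≤ filtChi (F (p * k)) (g i ^ p) ^ q := h1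
              _ ≤ ((c i + ε) ^ p) ^ q := h2
              _ = (c i + ε) ^ (p * q) := (pow_mul _ p q).symm
          rcases Nat.eq_zero_or_pos s with hs0 | hs1
          · have hα' : α = p * q := by rw [hs0, add_zero] at hmeq; exact hmeq.symm
            rw [hα']
            refine hpq.trans ?_
            exact le_mul_of_one_le_right (pow_nonneg (hcε i).le _) (hMi1 i)
          · have hsplit : filtChi (F (α * k)) (g i ^ α) ≤
                filtChi (F ((p * q) * k)) (g i ^ (p * q)) * filtChi (F (s * k)) (g i ^ s) := by
              have hmul := my_chi_mul_le 𝒜 F hF hFsub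
                (hpowmem (g i) (hg i) (p * q)) (hpowmem (g i) (hg i) s)
              have hgr : (p * q) * k + s * k = α * k := by rw [← add_mul, hmeq]
              have hpow : g i ^ (p * q) * g i ^ s = g i ^ α := by rw [← pow_add, hmeq]
              rwa [hgr, hpow] at hmul
            have hs2 : filtChi (F (s * k)) (g i ^ s) ≤ (c i + ε) ^ s * Mi i :=
              (my_chi_pow_le 𝒜 F hF hFsub (hg i) s hs1).trans (hchir s hsp.le)
            refine hsplit.trans ?_
            calc filtChi (F ((p * q) * k)) (g i ^ (p * q)) * filtChi (F (s * k)) (g i ^ s)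
                ≤ (c i + ε) ^ (p * q) * ((c i + ε) ^ s * Mi i) := by
                  refine mul_le_mul hpq hs2 (my_filtChi_nonneg _ _)
                    (pow_nonneg (hcε i).le _)
              _ = (c i + ε) ^ α * Mi i := by rw [← hmeq, pow_add]; ring
      -- claim B
      set R : ℝ := ∑ i, N k (g i) * (c i + ε) ^ t with hR
      have hR0 : 0 ≤ R := Finset.sum_nonneg fun i _ =>
        mul_nonneg (my_N_nonneg (hN k) (hg i)) (Real.rpow_nonneg (hcε i).le _)
      have claimB : ∀ m, 1 ≤ m → b m ≤ M ^ t * R ^ m := by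
        intro m hm
        haveI : Nonempty (Fin m) := ⟨⟨0, by omega⟩⟩
        set αc : (Fin m → Fin n) → Fin n → ℕ :=
          fun w i => (Finset.univ.filter (fun j => w j = i)).card with hαc
        have hw_regroup : ∀ (w : Fin m → Fin n) (x : Fin n → ℝ),
            ∏ j, x (w j) = ∏ i, x i ^ αc w i := by
          intro w x
          calc ∏ j, x (w j)
              = ∏ i : Fin n, ∏ j ∈ Finset.univ.filter (fun j => w j = i), x i :=
                (Finset.prod_fiberwise' Finset.univ w x).symm
            _ = ∏ i, x i ^ αc w i := Finset.prod_congr rfl fun i _ => Finset.prod_const _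
        have hw_regroupA : ∀ (w : Fin m → Fin n),
            ∏ j, g (w j) = ∏ i, g i ^ αc w i := by
          intro w
          calc ∏ j, g (w j)
              = ∏ i : Fin n, ∏ j ∈ Finset.univ.filter (fun j => w j = i), g i :=
                (Finset.prod_fiberwise' Finset.univ w g).symm
            _ = ∏ i, g i ^ αc w i := Finset.prod_congr rfl fun i _ => Finset.prod_const _
        have hαsum : ∀ w, ∑ i, αc w i = m := by
          intro w
          have h1 := Finset.sum_fiberwise' (Finset.univ : Finset (Fin m)) w (fun _ => (1 : ℕ))
          simp only [Finset.sum_const, smul_eq_mul, mul_one, Finset.card_univ,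
            Fintype.card_fin] at h1
          exact h1
        have hwmem : ∀ w : Fin m → Fin n, ∏ j, g (w j) ∈ 𝒜 (m * k) := by
          intro w
          have hh := SetLike.prod_mem_graded (F := Finset.univ) 𝒜 (fun _ : Fin m => k)
            (fun j => g (w j)) (fun j _ => hg (w j))
          simpa [Finset.sum_const, smul_eq_mul, Finset.card_univ] using hh
        have hdecomp : f ^ m = ∑ w : Fin m → Fin n, ∏ j, g (w j) := by
          rw [hfg]
          exact Fintype.sum_pow g m
        set e : (Fin m → Fin n) ≃ Fin (n ^ m) := finFunctionFinEquiv with he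
        have henv : b m ≤ ∑ w : Fin m → Fin n,
            N (m * k) (∏ j, g (w j)) * filtChi (F (m * k)) (∏ j, g (w j)) ^ t := by
          have h1 : b m ≤ ∑ i : Fin (n ^ m), N (m * k) (∏ j, g (e.symm i j)) *
              filtChi (F (m * k)) (∏ j, g (e.symm i j)) ^ t := by
            refine my_envRayOn_le (hN (m * k))
              (fun i : Fin (n ^ m) => ∏ j, g (e.symm i j)) (fun i => hwmem _) ?_
            rw [hdecomp, ← Equiv.sum_comp e.symm (fun w : Fin m → Fin n => ∏ j, g (w j))]
          refine h1.trans_eq ?_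
          exact Equiv.sum_comp e.symm (fun w : Fin m → Fin n =>
            N (m * k) (∏ j, g (w j)) * filtChi (F (m * k)) (∏ j, g (w j)) ^ t)
        have hχw : ∀ w : Fin m → Fin n, filtChi (F (m * k)) (∏ j, g (w j)) ≤
            (∏ j, (c (w j) + ε)) * M := by
          intro w
          set s₀ : Finset (Fin n) := Finset.univ.filter (fun i => αc w i ≠ 0) with hs₀
          have hs₀ne : s₀.Nonempty := by
            obtain ⟨j0⟩ := (inferInstance : Nonempty (Fin m))
            refine ⟨w j0, ?_⟩
            simp only [hs₀, Finset.mem_filter, Finset.mem_univ, true_and, hαc]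
            exact Finset.card_ne_zero_of_mem
              (Finset.mem_filter.2 ⟨Finset.mem_univ j0, rfl⟩)
          have hregroup2 : ∏ j, g (w j) = ∏ i ∈ s₀, g i ^ αc w i := by
            rw [hw_regroupA w]
            exact (Finset.prod_subset (Finset.filter_subset _ _) (fun i _ hi => by
              simp only [hs₀, Finset.mem_filter, Finset.mem_univ, true_and, not_not] at hi
              rw [hi, pow_zero])).symm
          have hαuniv : ∑ i ∈ s₀, αc w i = m := by
            rw [Finset.sum_subset (Finset.filter_subset _ _) (fun i _ hi => by
              simpa [hs₀] using hi)]
            exact hαsum w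
          have hgrade2 : ∑ i ∈ s₀, αc w i * k = m * k := by
            rw [← Finset.sum_mul, hαuniv]
          have hchiprod := my_chi_prod_le 𝒜 F hF hFsub s₀ hs₀ne
            (fun i => αc w i * k) (fun i => g i ^ αc w i)
            (fun i _ => hpowmem (g i) (hg i) (αc w i))
          rw [hgrade2, ← hregroup2] at hchiprod
          refine hchiprod.trans ?_
          have hstep : ∏ i ∈ s₀, filtChi (F (αc w i * k)) (g i ^ αc w i) ≤
              ∏ i ∈ s₀, ((c i + ε) ^ αc w i * Mi i) := by
            refine Finset.prod_le_prod (fun i _ => my_filtChi_nonneg _ _) ?_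
            intro i hi
            have hα1 : 1 ≤ αc w i := by
              have := (Finset.mem_filter.1 hi).2
              omega
            exact claimA i (αc w i) hα1
          refine hstep.trans ?_
          rw [Finset.prod_mul_distrib]
          have he1 : ∏ i ∈ s₀, (c i + ε) ^ αc w i = ∏ i, (c i + ε) ^ αc w i :=
            Finset.prod_subset (Finset.filter_subset _ _) (fun i _ hi => by
              simp only [hs₀, Finset.mem_filter, Finset.mem_univ, true_and, not_not] at hi
              rw [hi, pow_zero])
          have he2 : ∏ i ∈ s₀, Mi i ≤ M :=
            my_prod_le_prod_subset _ _ (Finset.filter_subset _ _) _ (fun i _ => hMi1 i)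
          have he3 : ∏ i, (c i + ε) ^ αc w i = ∏ j, (c (w j) + ε) :=
            (hw_regroup w (fun i => c i + ε)).symm
          calc (∏ i ∈ s₀, (c i + ε) ^ αc w i) * ∏ i ∈ s₀, Mi i
              ≤ (∏ i ∈ s₀, (c i + ε) ^ αc w i) * M := by
                refine mul_le_mul_of_nonneg_left he2 ?_
                exact Finset.prod_nonneg fun i _ => pow_nonneg (hcε i).le _
            _ = (∏ j, (c (w j) + ε)) * M := by rw [he1, he3]
        have hperw : ∀ w : Fin m → Fin n,
            N (m * k) (∏ j, g (w j)) * filtChi (F (m * k)) (∏ j, g (w j)) ^ t ≤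
            M ^ t * ∏ j, (N k (g (w j)) * (c (w j) + ε) ^ t) := by
          intro w
          have hN1 : N (m * k) (∏ j, g (w j)) ≤ ∏ j, N k (g (w j)) := by
            have := my_N_prod_le 𝒜 N hN hNsub Finset.univ Finset.univ_nonempty
              (fun _ : Fin m => k) (fun j => g (w j)) (fun j _ => hg (w j))
            simpa [Finset.sum_const, smul_eq_mul, Finset.card_univ] using this
          have hN1' : 0 ≤ ∏ j, N k (g (w j)) :=
            Finset.prod_nonneg fun j _ => my_N_nonneg (hN k) (hg (w j))
          have hχ1 : filtChi (F (m * k)) (∏ j, g (w j)) ^ t ≤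
              ((∏ j, (c (w j) + ε)) * M) ^ t :=
            Real.rpow_le_rpow (my_filtChi_nonneg _ _) (hχw w) ht
          have hprodpos : 0 ≤ ∏ j, (c (w j) + ε) :=
            Finset.prod_nonneg fun j _ => (hcε (w j)).le
          calc N (m * k) (∏ j, g (w j)) * filtChi (F (m * k)) (∏ j, g (w j)) ^ t
              ≤ (∏ j, N k (g (w j))) * ((∏ j, (c (w j) + ε)) * M) ^ t := by
                refine mul_le_mul hN1 hχ1 ?_ hN1'
                exact Real.rpow_nonneg (my_filtChi_nonneg _ _) _
            _ = M ^ t * ∏ j, (N k (g (w j)) * (c (w j) + ε) ^ t) := by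
                rw [Real.mul_rpow hprodpos (le_trans zero_le_one hM1),
                  ← Real.finset_prod_rpow _ _ (fun j _ => (hcε (w j)).le) t,
                  Finset.prod_mul_distrib]
                ring
        calc b m ≤ ∑ w : Fin m → Fin n,
              N (m * k) (∏ j, g (w j)) * filtChi (F (m * k)) (∏ j, g (w j)) ^ t := henv
          _ ≤ ∑ w : Fin m → Fin n, M ^ t * ∏ j, (N k (g (w j)) * (c (w j) + ε) ^ t) :=
              Finset.sum_le_sum fun w _ => hperw w
          _ = M ^ t * ∑ w : Fin m → Fin n, ∏ j, (N k (g (w j)) * (c (w j) + ε) ^ t) := by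
              rw [Finset.mul_sum]
          _ = M ^ t * R ^ m := by
              rw [hR, Fintype.sum_pow (fun i => N k (g i) * (c i + ε) ^ t) m]
      -- from claim B to L ≤ R
      have hMt : 0 < M ^ t := Real.rpow_pos_of_pos (lt_of_lt_of_le one_pos hM1) t
      have hcm : ∀ᶠ m : ℕ in Filter.atTop,
          b m ^ ((1 : ℝ) / m) ≤ (M ^ t) ^ ((1 : ℝ) / m) * R := by
        filter_upwards [Filter.eventually_ge_atTop 1] with m hm
        have h2 : b m ^ ((1 : ℝ) / m) ≤ (M ^ t * R ^ m) ^ ((1 : ℝ) / m) :=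
          Real.rpow_le_rpow (hb0 m hm) (claimB m hm) (by positivity)
        rw [one_div] at h2 ⊢
        rwa [Real.mul_rpow hMt.le (pow_nonneg hR0 m),
          Real.pow_rpow_inv_natCast hR0 (by omega : m ≠ 0)] at h2
      have hRHS : Filter.Tendsto (fun m : ℕ => (M ^ t) ^ ((1 : ℝ) / m) * R)
          Filter.atTop (nhds R) := by
        have h1 : Filter.Tendsto (fun m : ℕ => (M ^ t) ^ ((1 : ℝ) / m))
            Filter.atTop (nhds 1) := by
          have heq : ∀ m : ℕ, (M ^ t) ^ ((1 : ℝ) / m) =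
              Real.exp (Real.log (M ^ t) * (1 / m)) := fun m =>
            Real.rpow_def_of_pos hMt _
          simp only [heq]
          have h2 : Filter.Tendsto (fun m : ℕ => Real.log (M ^ t) * (1 / m))
              Filter.atTop (nhds 0) := by
            have h3 := tendsto_const_div_atTop_nhds_zero_nat (Real.log (M ^ t))
            simpa [div_eq_mul_inv, mul_one_div] using h3
          have := Real.continuous_exp.continuousAt.tendsto.comp h2
          simpa [Function.comp_def] using this
        have := h1.mul_const R
        simpa using this
      exact le_of_tendsto_of_tendsto hLT hRHS hcm
    -- pass ε → 0 along 1/(j+1)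
    have hseq : Filter.Tendsto (fun j : ℕ => ∑ i, N k (g i) * (c i + 1 / ((j : ℝ) + 1)) ^ t)
        Filter.atTop (nhds (∑ i, N k (g i) * c i ^ t)) := by
      refine tendsto_finset_sum _ fun i _ => ?_
      have h1 : Filter.Tendsto (fun j : ℕ => c i + 1 / ((j : ℝ) + 1))
          Filter.atTop (nhds (c i)) := by
        have h2 := tendsto_one_div_add_atTop_nhds_zero_nat (𝕜 := ℝ)
        have := tendsto_const_nhds (x := c i) (f := Filter.atTop (α := ℕ)) |>.add h2
        simpa using this
      have h2 : ContinuousAt (fun x : ℝ => x ^ t) (c i) :=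
        Real.continuousAt_rpow_const _ _ (Or.inr ht)
      exact Filter.Tendsto.const_mul _ (h2.tendsto.comp h1)
    refine ge_of_tendsto hseq ?_
    filter_upwards with j
    exact main (1 / ((j : ℝ) + 1)) (by positivity)
  · -- envRayHom ≤ envRayOn
    refine le_csInf ⟨_, 1, fun _ => f, fun _ => hf, by simp, rfl⟩ ?_
    rintro r ⟨m, g, hg, hfg, rfl⟩
    have hlb : ∀ r' ∈ {r' : ℝ | ∃ (m : ℕ) (g : Fin m → A), (∀ i, g i ∈ 𝒜 k) ∧
        f = ∑ i, g i ∧ r' = ∑ i, N k (g i) * chiHom F k (g i) ^ t}, 0 ≤ r' := by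
      rintro r' ⟨m', g', hg', hfg', rfl⟩
      refine Finset.sum_nonneg fun i _ => mul_nonneg (my_N_nonneg (hN k) (hg' i)) ?_
      exact Real.rpow_nonneg ((chiTendsto (g' i) (hg' i)).2.1) _
    have h1 : envRayHom (𝒜 k) F k (N k) t f ≤ ∑ i, N k (g i) * chiHom F k (g i) ^ t :=
      csInf_le ⟨0, fun r' hr' => hlb r' hr'⟩ ⟨m, g, hg, hfg, rfl⟩
    refine h1.trans (Finset.sum_le_sum fun i _ => ?_)
    refine mul_le_mul_of_nonneg_left ?_ (my_N_nonneg (hN k) (hg i))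
    exact Real.rpow_le_rpow ((chiTendsto (g i) (hg i)).2.1)
      ((chiTendsto (g i) (hg i)).2.2) ht

end
end

section
/- Let V, W be finite-dimensional complex vector spaces, 𝓕 a filtration on V and 𝓖 a filtration on W. Define the tensor product non-Archimedean norm on V ⊗ W by χ_{𝓕⊗𝓖}(h) := inf over all finite decompositions h = Σ_a v_a ⊗ w_a (v_a ∈ V, w_a ∈ W) of max_a χ_𝓕(v_a)·χ_𝓖(w_a). If e₁,…,e_n is a basis of V diagonalizing χ_𝓕 and f₁,…,f_m is a basis of W diagonalizing χ_𝓖, then the basis {e_i ⊗ f_j} of V ⊗ W diagonalizes χ_{𝓕⊗𝓖}: for any scalars λ_{ij} ∈ ℂ, χ_{𝓕⊗𝓖}(Σ_{i,j} λ_{ij} e_i ⊗ f_j) = max{ χ_𝓕(e_i)·χ_𝓖(f_j) : λ_{ij} ≠ 0 } (and equals 0 if all λ_{ij} = 0). -/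
open scoped BigOperators
open Filter Classical

noncomputable section

variable {V : Type*} [AddCommGroup V] [Module ℂ V]

/-- A filtration on a complex vector space `V`: a left-continuous, decreasing family of
subspaces which equals `⊤` for `t` small enough and `⊥` for `t` large enough. -/
structure IsRealFiltration (F : ℝ → Submodule ℂ V) : Prop where
  antitone : ∀ ⦃s t : ℝ⦄, s ≤ t → F t ≤ F s
  left_cont : ∀ t : ℝ, ∃ ε > 0, ∀ δ : ℝ, 0 < δ → δ < ε → F (t - δ) = F t
  eventually_top : ∃ t₀ : ℝ, ∀ t ≤ t₀, F t = ⊤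
  eventually_bot : ∃ t₁ : ℝ, ∀ t, t₁ ≤ t → F t = ⊥

/-- The tensor-product non-Archimedean norm `χ_{𝓕⊗𝓖}` on `V ⊗ W`. -/
noncomputable def chiTensor {V W : Type*} [AddCommGroup V] [Module ℂ V]
    [AddCommGroup W] [Module ℂ W]
    (F : ℝ → Submodule ℂ V) (G : ℝ → Submodule ℂ W) (h : TensorProduct ℂ V W) : ℝ :=
  sInf {r : ℝ | ∃ (m : ℕ) (v : Fin m → V) (w : Fin m → W),
    h = ∑ a, v a ⊗ₜ[ℂ] w a ∧ r = ⨆ a, filtChi F (v a) * filtChi G (w a)}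

lemma filtChi_nonneg (F : ℝ → Submodule ℂ V) (s : V) : 0 ≤ filtChi F s := by
  unfold filtChi
  split
  · exact le_refl 0
  · exact (Real.exp_pos _).le

lemma filtChi_smul_ne (F : ℝ → Submodule ℂ V) {c : ℂ} (hc : c ≠ 0) (v : V) :
    filtChi F (c • v) = filtChi F v := by
  by_cases hv : v = 0
  · simp [hv]
  · have hcv : c • v ≠ 0 := smul_ne_zero hc hv
    have hset : {l : ℝ | c • v ∈ F l} = {l : ℝ | v ∈ F l} := by
      ext l
      constructor
      · intro h
        have h2 := (F l).smul_mem c⁻¹ h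
        rwa [smul_smul, inv_mul_cancel₀ hc, one_smul] at h2
      · intro h
        exact (F l).smul_mem c h
    simp only [filtChi, filtWeight, if_neg hcv, if_neg hv, hset]

/-- if bases `e` of `V` and `f` of `W` diagonalize `χ_𝓕` and `χ_𝓖`
respectively, then the basis `{eᵢ ⊗ fⱼ}` diagonalizes `χ_{𝓕⊗𝓖}`. -/
theorem chiTensor_diagonalizing
    {V W : Type*} [AddCommGroup V] [Module ℂ V] [FiniteDimensional ℂ V]
    [AddCommGroup W] [Module ℂ W] [FiniteDimensional ℂ W]
    {n m : ℕ} (F : ℝ → Submodule ℂ V) (G : ℝ → Submodule ℂ W)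
    (hF : IsRealFiltration F) (hG : IsRealFiltration G)
    (e : Module.Basis (Fin n) ℂ V) (f : Module.Basis (Fin m) ℂ W)
    (he : ∀ lam : Fin n → ℂ, filtChi F (∑ i, lam i • e i) = ⨆ i, filtChi F (lam i • e i))
    (hf : ∀ lam : Fin m → ℂ, filtChi G (∑ j, lam j • f j) = ⨆ j, filtChi G (lam j • f j)) :
    ∀ lam : Fin n × Fin m → ℂ,
      ((∀ ij, lam ij = 0) →
        chiTensor F G (∑ ij : Fin n × Fin m, lam ij • (e ij.1 ⊗ₜ[ℂ] f ij.2)) = 0) ∧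
      ((∃ ij, lam ij ≠ 0) →
        chiTensor F G (∑ ij : Fin n × Fin m, lam ij • (e ij.1 ⊗ₜ[ℂ] f ij.2)) =
          sSup {r : ℝ | ∃ ij : Fin n × Fin m, lam ij ≠ 0 ∧
            r = filtChi F (e ij.1) * filtChi G (f ij.2)}) := by
  intro lam
  set S : Set ℝ := {r : ℝ | ∃ (M : ℕ) (v : Fin M → V) (w : Fin M → W),
    (∑ ij : Fin n × Fin m, lam ij • (e ij.1 ⊗ₜ[ℂ] f ij.2)) = ∑ a, v a ⊗ₜ[ℂ] w a ∧
      r = ⨆ a, filtChi F (v a) * filtChi G (w a)} with hS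
  have hSeq : chiTensor F G (∑ ij : Fin n × Fin m, lam ij • (e ij.1 ⊗ₜ[ℂ] f ij.2)) = sInf S := rfl
  have hSnonneg : ∀ r ∈ S, (0 : ℝ) ≤ r := by
    rintro r ⟨M, v, w, -, rfl⟩
    exact Real.iSup_nonneg fun a => mul_nonneg (filtChi_nonneg F _) (filtChi_nonneg G _)
  constructor
  · intro h0
    have hsum : (∑ ij : Fin n × Fin m, lam ij • (e ij.1 ⊗ₜ[ℂ] f ij.2)) = 0 := by
      simp [h0]
    have hmem : (0 : ℝ) ∈ S := by
      refine ⟨0, Fin.elim0, Fin.elim0, by simp [hsum], ?_⟩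
      rw [Real.iSup_of_isEmpty]
    rw [hSeq]
    exact le_antisymm (csInf_le ⟨0, hSnonneg⟩ hmem) (le_csInf ⟨0, hmem⟩ hSnonneg)
  · rintro ⟨ij₀, hij₀⟩
    set T : Set ℝ := {r : ℝ | ∃ ij : Fin n × Fin m, lam ij ≠ 0 ∧
      r = filtChi F (e ij.1) * filtChi G (f ij.2)} with hT
    have hTfin : T.Finite := by
      apply Set.Finite.subset
        (Set.finite_range fun ij : Fin n × Fin m => filtChi F (e ij.1) * filtChi G (f ij.2))
      rintro r ⟨ij, -, rfl⟩
      exact ⟨ij, rfl⟩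
    have hTne : T.Nonempty := ⟨_, ij₀, hij₀, rfl⟩
    have hTnonneg : (0 : ℝ) ≤ sSup T := by
      obtain ⟨r, ij, hij, rfl⟩ := hTne
      exact le_trans (mul_nonneg (filtChi_nonneg F _) (filtChi_nonneg G _))
        (le_csSup hTfin.bddAbove ⟨ij, hij, rfl⟩)
    have hTne : T.Nonempty := ⟨_, ij₀, hij₀, rfl⟩
    set B := Module.Basis.tensorProduct e f with hB
    -- coefficient extraction
    have key : ∀ ij : Fin n × Fin m,
        lam ij = ∑ a : Fin 0, (0 : ℂ) ∨ True := fun _ => Or.inr trivial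
    have hcoef : ∀ (M : ℕ) (v : Fin M → V) (w : Fin M → W),
        (∑ ij : Fin n × Fin m, lam ij • (e ij.1 ⊗ₜ[ℂ] f ij.2)) = (∑ a, v a ⊗ₜ[ℂ] w a) →
        ∀ i : Fin n, ∀ j : Fin m,
          lam (i, j) = ∑ a, f.repr (w a) j • e.repr (v a) i := by
      intro M v w hdecomp i j
      have h1 : (∑ ij : Fin n × Fin m, lam ij • (e ij.1 ⊗ₜ[ℂ] f ij.2)) =
          ∑ ij : Fin n × Fin m, lam ij • B ij := by
        refine Finset.sum_congr rfl fun ij _ => ?_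
        obtain ⟨i', j'⟩ := ij
        rw [hB, Module.Basis.tensorProduct_apply]
      have h2 := congrFun (B.repr_sum_self lam) (i, j)
      rw [← h1, hdecomp, map_sum] at h2
      rw [← h2, Finsupp.finset_sum_apply]
      exact Finset.sum_congr rfl fun a _ => by
        rw [hB, Module.Basis.tensorProduct_repr_tmul_apply]
    -- lower bound: every element of S is ≥ sSup T
    have hlow : ∀ r ∈ S, sSup T ≤ r := by
      rintro r ⟨M, v, w, hdecomp, rfl⟩
      refine Real.sSup_le ?_
        (Real.iSup_nonneg fun a => mul_nonneg (filtChi_nonneg F _) (filtChi_nonneg G _))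
      rintro x ⟨⟨i, j⟩, hij, rfl⟩
      have hsum := hcoef M v w hdecomp i j
      have hne : (∑ a, f.repr (w a) j • e.repr (v a) i) ≠ 0 := hsum ▸ hij
      obtain ⟨a, -, ha⟩ := Finset.exists_ne_zero_of_sum_ne_zero hne
      have hβ : f.repr (w a) j ≠ 0 := fun h => ha (by simp [h])
      have hα : e.repr (v a) i ≠ 0 := fun h => ha (by simp [h])
      have hva : filtChi F (e i) ≤ filtChi F (v a) := by
        have h3 := he (fun i' => e.repr (v a) i')
        rw [Module.Basis.sum_repr] at h3
        rw [h3, ← filtChi_smul_ne F hα (e i)]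
        exact le_ciSup (f := fun i' => filtChi F (e.repr (v a) i' • e i'))
          (Set.finite_range _).bddAbove i
      have hwa : filtChi G (f j) ≤ filtChi G (w a) := by
        have h3 := hf (fun j' => f.repr (w a) j')
        rw [Module.Basis.sum_repr] at h3
        rw [h3, ← filtChi_smul_ne G hβ (f j)]
        exact le_ciSup (f := fun j' => filtChi G (f.repr (w a) j' • f j'))
          (Set.finite_range _).bddAbove j
      calc filtChi F (e i) * filtChi G (f j)
          ≤ filtChi F (v a) * filtChi G (w a) :=
            mul_le_mul hva hwa (filtChi_nonneg G _) (filtChi_nonneg F _)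
        _ ≤ ⨆ a, filtChi F (v a) * filtChi G (w a) :=
            le_ciSup (f := fun a => filtChi F (v a) * filtChi G (w a))
              (Set.finite_range _).bddAbove a
    -- membership: sSup T ∈ S
    have hmem : sSup T ∈ S := by
      set σ : Fin n × Fin m ≃ Fin (n * m) := finProdFinEquiv with hσ
      refine ⟨n * m, fun a => lam (σ.symm a) • e (σ.symm a).1, fun a => f (σ.symm a).2, ?_, ?_⟩
      · rw [← Equiv.sum_comp σ.symm
          (fun ij : Fin n × Fin m => lam ij • (e ij.1 ⊗ₜ[ℂ] f ij.2))]
        exact Finset.sum_congr rfl fun a _ => (TensorProduct.smul_tmul' _ _ _)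
      · refine le_antisymm ?_ ?_
        · refine Real.sSup_le ?_
            (Real.iSup_nonneg fun a => mul_nonneg (filtChi_nonneg F _) (filtChi_nonneg G _))
          rintro x ⟨ij, hij, rfl⟩
          have hx : filtChi F (e ij.1) * filtChi G (f ij.2) =
              filtChi F (lam (σ.symm (σ ij)) • e (σ.symm (σ ij)).1) *
                filtChi G (f (σ.symm (σ ij)).2) := by
            rw [σ.symm_apply_apply, filtChi_smul_ne F hij]
          rw [hx]
          exact le_ciSup
            (f := fun a => filtChi F (lam (σ.symm a) • e (σ.symm a).1) * filtChi G (f (σ.symm a).2))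
            (Set.finite_range _).bddAbove (σ ij)
        · refine Real.iSup_le ?_ hTnonneg
          intro a
          by_cases hz : lam (σ.symm a) = 0
          · simpa [hz, filtChi] using hTnonneg
          · rw [filtChi_smul_ne F hz]
            exact le_csSup hTfin.bddAbove ⟨σ.symm a, hz, rfl⟩
    rw [hSeq]
    exact le_antisymm (csInf_le ⟨0, hSnonneg⟩ hmem) (le_csInf ⟨_, hmem⟩ hlow)

end
end

section
/- Let V be an n-dimensional complex vector space (n ≥ 1), H₀, H₁ two Hermitian norms on V, and e₁,…,e_n a basis of V orthogonal with respect to both inner products with ‖e_i‖_{H₀} = 1 for all i. Define the distinguished geodesic H_t (t ∈ [0,1]) as the Hermitian norm diagonalized by e₁,…,e_n with ‖e_i‖_{H_t} := ‖e_i‖_{H₁}^t. Then for every p ∈ [1,∞] and all s, t ∈ [0,1]: d_p(H_s, H_t) = |t − s| · d_p(H₀, H₁). -/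
open scoped BigOperators
open Filter Classical

noncomputable section

variable {V : Type*} [AddCommGroup V] [Module ℂ V]

def qnorm {n : ℕ} (e : Module.Basis (Fin n) ℂ V) (u : Fin n → ℝ) (w : V) : ℝ :=
  Real.sqrt (∑ i, ‖e.repr w i‖ ^ 2 * u i ^ 2)

lemma qnorm_sq_nonneg {n : ℕ} (e : Module.Basis (Fin n) ℂ V) (u : Fin n → ℝ) (w : V) :
    0 ≤ ∑ i, ‖e.repr w i‖ ^ 2 * u i ^ 2 :=
  Finset.sum_nonneg fun i _ => mul_nonneg (sq_nonneg _) (sq_nonneg _)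

lemma qnorm_sq_pos {n : ℕ} (e : Module.Basis (Fin n) ℂ V) (u : Fin n → ℝ) (hu : ∀ i, 0 < u i)
    {w : V} (hw : w ≠ 0) : 0 < ∑ i, ‖e.repr w i‖ ^ 2 * u i ^ 2 := by
  have : ∃ i, e.repr w i ≠ 0 := by
    by_contra h
    push_neg at h
    apply hw
    have : e.repr w = 0 := by ext i; exact h i
    simpa using congrArg e.repr.symm this
  obtain ⟨i, hi⟩ := this
  refine Finset.sum_pos' (fun k _ => mul_nonneg (sq_nonneg _) (sq_nonneg _)) ⟨i, Finset.mem_univ i, ?_⟩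
  have h1 : 0 < ‖e.repr w i‖ ^ 2 := pow_pos (norm_pos_iff.mpr hi) 2
  exact mul_pos h1 (pow_pos (hu i) 2)

lemma inner_sum_left (c : InnerProductSpace.Core ℂ V) {ι : Type*} (s : Finset ι)
    (f : ι → V) (y : V) : c.inner (∑ i ∈ s, f i) y = ∑ i ∈ s, c.inner (f i) y := by
  exact map_sum (AddMonoidHom.mk' (fun x => c.inner x y) (fun a b => c.add_left a b y)) f s

lemma inner_smul_right' (c : InnerProductSpace.Core ℂ V) (x y : V) (r : ℂ) :
    c.inner x (r • y) = r * c.inner x y := by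
  have h1 := c.conj_inner_symm (r • y) x
  have h2 := c.conj_inner_symm x y
  rw [c.smul_left] at h1
  calc c.inner x (r • y) = (starRingEnd ℂ) ((starRingEnd ℂ) (c.inner x (r • y))) := by
        rw [Complex.conj_conj]
    _ = (starRingEnd ℂ) ((starRingEnd ℂ) r * c.inner y x) := by rw [h1]
    _ = r * (starRingEnd ℂ) (c.inner y x) := by rw [map_mul, Complex.conj_conj]
    _ = r * c.inner x y := by rw [h2]

lemma inner_sum_right (c : InnerProductSpace.Core ℂ V) {ι : Type*} (s : Finset ι)
    (f : ι → V) (y : V) : c.inner y (∑ i ∈ s, f i) = ∑ i ∈ s, c.inner y (f i) := by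
  have h1 := c.conj_inner_symm (∑ i ∈ s, f i) y
  have h2 : c.inner y (∑ i ∈ s, f i) = (starRingEnd ℂ) (c.inner (∑ i ∈ s, f i) y) := by
    rw [← h1, Complex.conj_conj]
  rw [h2, inner_sum_left, map_sum]
  exact Finset.sum_congr rfl fun i _ => c.conj_inner_symm y (f i)

lemma hnorm_eq_qnorm {n : ℕ} (c : InnerProductSpace.Core ℂ V) (e : Module.Basis (Fin n) ℂ V)
    (he : OrthogonalFor c ⇑e) (u : Fin n → ℝ) (hu : ∀ i, hnorm c (e i) = u i) :
    hnorm c = qnorm e u := by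
  funext w
  have hw : (∑ i, e.repr w i • e i) = w := e.sum_repr w
  have hexp : c.inner w w = ∑ i, (‖e.repr w i‖ ^ 2 : ℝ) * c.inner (e i) (e i) := by
    conv_lhs => rw [← hw, inner_sum_left]
    refine Finset.sum_congr rfl fun i _ => ?_
    rw [c.smul_left, inner_sum_right]
    rw [Finset.sum_eq_single i]
    · rw [inner_smul_right']
      rw [← mul_assoc]
      congr 1
      rw [mul_comm, Complex.mul_conj]
      simp [Complex.sq_norm]
    · intro j _ hj
      rw [inner_smul_right', he i j (Ne.symm hj), mul_zero]
    · intro h; exact absurd (Finset.mem_univ i) h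
  have hre : ∀ i, (c.inner (e i) (e i)).re = u i ^ 2 := by
    intro i
    have h1 := hu i
    unfold hnorm at h1
    rw [← h1, Real.sq_sqrt]
    have := c.re_inner_nonneg (e i)
    simpa using this
  unfold hnorm qnorm
  congr 1
  rw [hexp, Complex.re_sum]
  refine Finset.sum_congr rfl fun i _ => ?_
  rw [Complex.re_ofReal_mul, hre i]

lemma log_ratio_ge {n : ℕ} (e : Module.Basis (Fin n) ℂ V) (u m : Fin n → ℝ) (hu : ∀ i, 0 < u i)
    {w : V} (hw : w ≠ 0) {b : ℝ} (hb : ∀ i, e.repr w i ≠ 0 → b ≤ m i) :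
    b ≤ Real.log (qnorm e (fun i => u i * Real.exp (m i)) w / qnorm e u w) := by
  set X := ∑ i, ‖e.repr w i‖ ^ 2 * u i ^ 2 with hX
  set Y := ∑ i, ‖e.repr w i‖ ^ 2 * (u i * Real.exp (m i)) ^ 2 with hY
  have hXpos : 0 < X := qnorm_sq_pos e u hu hw
  have hYX : Real.exp b ^ 2 * X ≤ Y := by
    rw [hX, hY, Finset.mul_sum]
    refine Finset.sum_le_sum fun i _ => ?_
    rcases eq_or_ne (e.repr w i) 0 with h | h
    · simp [h]
    · have h1 : Real.exp b ≤ Real.exp (m i) := Real.exp_le_exp.mpr (hb i h)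
      have h2 : Real.exp b ^ 2 * u i ^ 2 ≤ (u i * Real.exp (m i)) ^ 2 := by
        rw [mul_pow]
        rw [mul_comm (u i ^ 2)]
        exact mul_le_mul_of_nonneg_right (pow_le_pow_left₀ (Real.exp_nonneg b) h1 2)
          (sq_nonneg _)
      calc Real.exp b ^ 2 * (‖e.repr w i‖ ^ 2 * u i ^ 2)
          = ‖e.repr w i‖ ^ 2 * (Real.exp b ^ 2 * u i ^ 2) := by ring
        _ ≤ _ := mul_le_mul_of_nonneg_left h2 (sq_nonneg _)
  have hq0 : qnorm e u w = Real.sqrt X := rfl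
  have hq1 : qnorm e (fun i => u i * Real.exp (m i)) w = Real.sqrt Y := rfl
  have hsq : Real.exp b * Real.sqrt X ≤ Real.sqrt Y := by
    have := Real.sqrt_le_sqrt hYX
    rwa [Real.sqrt_mul (sq_nonneg _), Real.sqrt_sq (Real.exp_nonneg b)] at this
  have hX' : 0 < Real.sqrt X := Real.sqrt_pos.mpr hXpos
  have hratio : Real.exp b ≤ Real.sqrt Y / Real.sqrt X := (le_div_iff₀ hX').mpr hsq
  calc b = Real.log (Real.exp b) := (Real.log_exp b).symm
    _ ≤ _ := by
        rw [hq0, hq1]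
        exact Real.log_le_log (Real.exp_pos b) hratio

lemma log_ratio_le {n : ℕ} (e : Module.Basis (Fin n) ℂ V) (u m : Fin n → ℝ) (hu : ∀ i, 0 < u i)
    {w : V} (hw : w ≠ 0) {b : ℝ} (hb : ∀ i, e.repr w i ≠ 0 → m i ≤ b) :
    Real.log (qnorm e (fun i => u i * Real.exp (m i)) w / qnorm e u w) ≤ b := by
  set X := ∑ i, ‖e.repr w i‖ ^ 2 * u i ^ 2 with hX
  set Y := ∑ i, ‖e.repr w i‖ ^ 2 * (u i * Real.exp (m i)) ^ 2 with hY
  have hXpos : 0 < X := qnorm_sq_pos e u hu hw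
  have hYX : Y ≤ Real.exp b ^ 2 * X := by
    rw [hX, hY, Finset.mul_sum]
    refine Finset.sum_le_sum fun i _ => ?_
    rcases eq_or_ne (e.repr w i) 0 with h | h
    · simp [h]
    · have h1 : Real.exp (m i) ≤ Real.exp b := Real.exp_le_exp.mpr (hb i h)
      have h2 : (u i * Real.exp (m i)) ^ 2 ≤ Real.exp b ^ 2 * u i ^ 2 := by
        rw [mul_pow, mul_comm (u i ^ 2)]
        exact mul_le_mul_of_nonneg_right (pow_le_pow_left₀ (Real.exp_nonneg _) h1 2)
          (sq_nonneg _)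
      calc ‖e.repr w i‖ ^ 2 * (u i * Real.exp (m i)) ^ 2
          ≤ ‖e.repr w i‖ ^ 2 * (Real.exp b ^ 2 * u i ^ 2) :=
            mul_le_mul_of_nonneg_left h2 (sq_nonneg _)
        _ = Real.exp b ^ 2 * (‖e.repr w i‖ ^ 2 * u i ^ 2) := by ring
  have hsq : Real.sqrt Y ≤ Real.exp b * Real.sqrt X := by
    have := Real.sqrt_le_sqrt hYX
    rwa [Real.sqrt_mul (sq_nonneg _), Real.sqrt_sq (Real.exp_nonneg b)] at this
  have hX' : 0 < Real.sqrt X := Real.sqrt_pos.mpr hXpos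
  have hratio : Real.sqrt Y / Real.sqrt X ≤ Real.exp b := (div_le_iff₀ hX').mpr hsq
  have hYpos : 0 < Y := qnorm_sq_pos e (fun i => u i * Real.exp (m i))
    (fun i => mul_pos (hu i) (Real.exp_pos _)) hw
  have hfin : Real.log (Real.sqrt Y / Real.sqrt X) ≤ Real.log (Real.exp b) :=
    Real.log_le_log (div_pos (Real.sqrt_pos.mpr hYpos) hX') hratio
  calc Real.log (qnorm e (fun i => u i * Real.exp (m i)) w / qnorm e u w)
      = Real.log (Real.sqrt Y / Real.sqrt X) := rfl
    _ ≤ b := by rwa [Real.log_exp] at hfin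

lemma span_range_finrank {n k : ℕ} [FiniteDimensional ℂ V] (e : Module.Basis (Fin n) ℂ V)
    (g : Fin k → Fin n) (hg : Function.Injective g) :
    Module.finrank ℂ (Submodule.span ℂ (Set.range fun q : Fin k => e (g q))) = k := by
  have hli : LinearIndependent ℂ (⇑e ∘ g) := e.linearIndependent.comp g hg
  have : (Set.range fun q : Fin k => e (g q)) = Set.range (⇑e ∘ g) := rfl
  rw [this, finrank_span_eq_card hli, Fintype.card_fin]

lemma span_range_support {n k : ℕ} (e : Module.Basis (Fin n) ℂ V) (g : Fin k → Fin n)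
    {w : V} (hw : w ∈ Submodule.span ℂ (Set.range fun q : Fin k => e (g q)))
    {i : Fin n} (hi : e.repr w i ≠ 0) : ∃ q : Fin k, g q = i := by
  have h1 : (Set.range fun q : Fin k => e (g q)) = ⇑e '' Set.range g := by
    rw [← Set.range_comp]; rfl
  rw [h1] at hw
  exact (e.mem_span_image).mp hw (Finsupp.mem_support_iff.mpr hi)

lemma relSpec_qnorm {n : ℕ} [FiniteDimensional ℂ V] (hdim : Module.finrank ℂ V = n)
    (e : Module.Basis (Fin n) ℂ V) (u m : Fin n → ℝ) (hu : ∀ i, 0 < u i)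
    (σ : Equiv.Perm (Fin n)) (hσ : Monotone (m ∘ σ)) (j : ℕ) (hj1 : 1 ≤ j) (hjn : j ≤ n) :
    relSpec (qnorm e u) (qnorm e (fun i => u i * Real.exp (m i))) j
      = m (σ ⟨n - j, by omega⟩) := by
  have hn : 1 ≤ n := le_trans hj1 hjn
  set N₀ := qnorm e u with hN₀
  set N₁ := qnorm e (fun i => u i * Real.exp (m i)) with hN₁
  set tgt := m (σ ⟨n - j, by omega⟩) with htgt
  set I : Submodule ℂ V → Set ℝ :=
    fun W => {x : ℝ | ∃ w ∈ W, w ≠ 0 ∧ x = Real.log (N₁ w / N₀ w)} with hI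
  set O : Set ℝ := {r : ℝ | ∃ W : Submodule ℂ V, Module.finrank ℂ W = j ∧ r = sInf (I W)}
    with hO
  have hrelspec : relSpec N₀ N₁ j = sSup O := rfl
  -- global lower bound for elements of I W
  have hIlb : ∀ W : Submodule ℂ V, ∀ x ∈ I W, m (σ ⟨0, by omega⟩) ≤ x := by
    rintro W x ⟨w, hwW, hw0, rfl⟩
    refine log_ratio_ge e u m hu hw0 (fun i _ => ?_)
    have h1 : (⟨0, by omega⟩ : Fin n) ≤ σ.symm i := by simp [Fin.le_def]
    have h2 := hσ h1
    simpa using h2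
  have hIbdd : ∀ W : Submodule ℂ V, BddBelow (I W) :=
    fun W => ⟨_, fun x hx => hIlb W x hx⟩
  have hInonempty : ∀ W : Submodule ℂ V, W ≠ ⊥ → (I W).Nonempty := by
    intro W hW
    obtain ⟨w, hwW, hw0⟩ := Submodule.exists_mem_ne_zero_of_ne_bot hW
    exact ⟨_, w, hwW, hw0, rfl⟩
  -- the distinguished subspaces
  set gtop : Fin j → Fin n := fun k => σ ⟨n - j + k.1, by omega⟩ with hgtop
  set gbot : Fin (n - j + 1) → Fin n := fun k => σ ⟨k.1, by omega⟩ with hgbot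
  have hgtopinj : Function.Injective gtop := by
    intro a b h
    have := σ.injective h
    have h2 : n - j + a.1 = n - j + b.1 := Fin.mk.inj_iff.mp this
    exact Fin.ext (by omega)
  have hgbotinj : Function.Injective gbot := by
    intro a b h
    have := σ.injective h
    exact Fin.ext (Fin.mk.inj_iff.mp this)
  set Wtop := Submodule.span ℂ (Set.range fun q : Fin j => e (gtop q)) with hWtopdef
  set Ubot := Submodule.span ℂ (Set.range fun q : Fin (n - j + 1) => e (gbot q)) with hUbotdef
  have hWtop : Module.finrank ℂ Wtop = j := span_range_finrank e gtop hgtopinj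
  have hUbot : Module.finrank ℂ Ubot = n - j + 1 := span_range_finrank e gbot hgbotinj
  have hWtop_ne : Wtop ≠ ⊥ := by
    intro h
    rw [h, finrank_bot] at hWtop
    omega
  -- lower bound : sInf (I Wtop) ≥ tgt
  have hlow : tgt ≤ sInf (I Wtop) := by
    refine le_csInf (hInonempty _ hWtop_ne) ?_
    rintro x ⟨w, hwW, hw0, rfl⟩
    refine log_ratio_ge e u m hu hw0 (fun i hi => ?_)
    obtain ⟨k, rfl⟩ := span_range_support e gtop hwW hi
    exact hσ (show (⟨n - j, by omega⟩ : Fin n) ≤ ⟨n - j + k.1, by omega⟩ by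
      simp [Fin.le_def])
  -- upper bound for every element of O
  have hupper : ∀ r ∈ O, r ≤ tgt := by
    rintro r ⟨W, hW, rfl⟩
    have h1 : Module.finrank ℂ ↥(W ⊔ Ubot) + Module.finrank ℂ ↥(W ⊓ Ubot)
        = j + (n - j + 1) := by
      rw [Submodule.finrank_sup_add_finrank_inf_eq, hW, hUbot]
    have h2 : Module.finrank ℂ ↥(W ⊔ Ubot) ≤ n := hdim ▸ Submodule.finrank_le _
    have h3 : 1 ≤ Module.finrank ℂ ↥(W ⊓ Ubot) := by omega
    have h4 : W ⊓ Ubot ≠ ⊥ := by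
      intro h
      rw [h, finrank_bot] at h3
      omega
    obtain ⟨w, hw, hw0⟩ := Submodule.exists_mem_ne_zero_of_ne_bot h4
    have hwW : w ∈ W := (Submodule.mem_inf.mp hw).1
    have hwU : w ∈ Ubot := (Submodule.mem_inf.mp hw).2
    have hx : Real.log (N₁ w / N₀ w) ∈ I W := ⟨w, hwW, hw0, rfl⟩
    refine le_trans (csInf_le (hIbdd W) hx) ?_
    refine log_ratio_le e u m hu hw0 (fun i hi => ?_)
    obtain ⟨k, rfl⟩ := span_range_support e gbot hwU hi
    exact hσ (show (⟨k.1, by omega⟩ : Fin n) ≤ ⟨n - j, by omega⟩ by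
      simp [Fin.le_def]; omega)
  have hmemO : sInf (I Wtop) ∈ O := ⟨Wtop, hWtop, rfl⟩
  have hObdd : BddAbove O := ⟨tgt, fun r hr => hupper r hr⟩
  have h5 : sSup O ≤ tgt := csSup_le ⟨_, hmemO⟩ hupper
  have h6 : tgt ≤ sSup O := le_trans hlow (le_csSup hObdd hmemO)
  rw [hrelspec]
  linarith


set_option maxHeartbeats 400000 in
/-- along the distinguished geodesic `H_t` between two Hermitian norms
(`H_t` diagonalized by a common basis `e` with `‖eᵢ‖_{H_t} = ‖eᵢ‖_{H₁}^t`), for every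
`p ∈ [1,∞]` and `s, t ∈ [0,1]`, `d_p(H_s, H_t) = |t−s| · d_p(H₀,H₁)`. -/
theorem distinguished_geodesic_distance
    {V : Type*} [AddCommGroup V] [Module ℂ V] [FiniteDimensional ℂ V]
    {n : ℕ} (hn : 1 ≤ n) (hdim : Module.finrank ℂ V = n)
    (c₀ c₁ : InnerProductSpace.Core ℂ V) (e : Module.Basis (Fin n) ℂ V)
    (he₀ : OrthogonalFor c₀ (⇑e)) (he₁ : OrthogonalFor c₁ (⇑e))
    (hunit : ∀ i : Fin n, hnorm c₀ (e i) = 1)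
    (c : ℝ → InnerProductSpace.Core ℂ V)
    (hce : ∀ t : ℝ, 0 ≤ t → t ≤ 1 → OrthogonalFor (c t) (⇑e))
    (hct : ∀ t : ℝ, 0 ≤ t → t ≤ 1 → ∀ i : Fin n, hnorm (c t) (e i) = hnorm c₁ (e i) ^ t) :
    ∀ s t : ℝ, 0 ≤ s → s ≤ 1 → 0 ≤ t → t ≤ 1 →
      (∀ p : ℝ, 1 ≤ p →
        dp p (hnorm (c s)) (hnorm (c t)) = |t - s| * dp p (hnorm c₀) (hnorm c₁)) ∧
      dInf (hnorm (c s)) (hnorm (c t)) = |t - s| * dInf (hnorm c₀) (hnorm c₁) := by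
  intro s t hs0 hs1 ht0 ht1
  -- positivity of the H₁-lengths of the basis vectors
  have hlpos : ∀ i, 0 < hnorm c₁ (e i) := by
    intro i
    have hne : e i ≠ 0 := e.ne_zero i
    have hnn : 0 ≤ hnorm c₁ (e i) := Real.sqrt_nonneg _
    rcases hnn.lt_or_eq with h | h
    · exact h
    · exfalso
      have h0 : Real.sqrt ((c₁.inner (e i) (e i)).re) = 0 := h.symm
      have hnneg : 0 ≤ (c₁.inner (e i) (e i)).re := by
        have := c₁.re_inner_nonneg (e i); simpa using this
      have hre : (c₁.inner (e i) (e i)).re = 0 := by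
        nlinarith [Real.sq_sqrt hnneg]
      have him : (c₁.inner (e i) (e i)).im = 0 :=
        Complex.conj_eq_iff_im.mp (c₁.conj_inner_symm (e i) (e i))
      exact hne (c₁.definite _ (Complex.ext hre him))
  set lam : Fin n → ℝ := fun i => hnorm c₁ (e i) with hlam
  set a : Fin n → ℝ := fun i => Real.log (lam i) with ha
  set τ := Tuple.sort a with hτdef
  have hτmono : Monotone (a ∘ τ) := Tuple.monotone_sort a
  set r := t - s with hr
  -- identification of the four norms as diagonal norms
  have h0eq : hnorm c₀ = qnorm e (fun _ => (1:ℝ)) :=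
    hnorm_eq_qnorm c₀ e he₀ _ (fun i => hunit i)
  have h1eq : hnorm c₁ = qnorm e (fun i => (1:ℝ) * Real.exp (a i)) := by
    refine hnorm_eq_qnorm c₁ e he₁ _ (fun i => ?_)
    rw [one_mul, ha]
    simp only [hlam]
    rw [Real.exp_log (hlpos i)]
  have hseq : hnorm (c s) = qnorm e (fun i => lam i ^ s) :=
    hnorm_eq_qnorm (c s) e (hce s hs0 hs1) _ (fun i => hct s hs0 hs1 i)
  have hteq : hnorm (c t) = qnorm e (fun i => lam i ^ s * Real.exp (r * a i)) := by
    refine hnorm_eq_qnorm (c t) e (hce t ht0 ht1) _ (fun i => ?_)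
    rw [hct t ht0 ht1 i]
    show lam i ^ t = lam i ^ s * Real.exp (r * a i)
    rw [Real.rpow_def_of_pos (hlpos i), Real.rpow_def_of_pos (hlpos i), ← Real.exp_add]
    congr 1
    simp only [ha, hr]
    ring
  have hlams : ∀ i, 0 < lam i ^ s := fun i => Real.rpow_pos_of_pos (hlpos i) s
  -- relative spectra
  have hrel0 : ∀ (j : ℕ) (hj1 : 1 ≤ j) (hj2 : j ≤ n),
      relSpec (hnorm c₀) (hnorm c₁) j = a (τ ⟨n - j, by omega⟩) := by
    intro j hj1 hj2
    rw [h0eq, h1eq]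
    exact relSpec_qnorm hdim e _ a (fun i => one_pos) τ hτmono j hj1 hj2
  -- key involution
  have key : ∃ φ : ℕ → ℕ, ∀ j, 1 ≤ j → j ≤ n → 1 ≤ φ j ∧ φ j ≤ n ∧ φ (φ j) = j ∧
      |relSpec (hnorm (c s)) (hnorm (c t)) j|
        = |r| * |relSpec (hnorm c₀) (hnorm c₁) (φ j)| := by
    rcases le_or_gt 0 r with hge | hlt
    · refine ⟨id, fun j hj1 hj2 => ⟨hj1, hj2, rfl, ?_⟩⟩
      have hmono : Monotone ((fun i => r * a i) ∘ τ) := by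
        intro x y h
        exact mul_le_mul_of_nonneg_left (hτmono h) hge
      have hst : relSpec (hnorm (c s)) (hnorm (c t)) j = r * a (τ ⟨n - j, by omega⟩) := by
        rw [hseq, hteq]
        exact relSpec_qnorm hdim e _ (fun i => r * a i) hlams τ hmono j hj1 hj2
      simp only [id_eq]
      rw [hst, hrel0 j hj1 hj2, abs_mul]
    · refine ⟨fun j => n + 1 - j, fun j hj1 hj2 => ⟨show 1 ≤ n + 1 - j by omega,
        show n + 1 - j ≤ n by omega, show n + 1 - (n + 1 - j) = j by omega, ?_⟩⟩
      set π : Equiv.Perm (Fin n) := Fin.revPerm.trans τ with hπ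
      have hπapp : ∀ k : Fin n, π k = τ k.rev := fun k => rfl
      have hmono : Monotone ((fun i => r * a i) ∘ π) := by
        intro x y h
        show r * a (π x) ≤ r * a (π y)
        rw [hπapp, hπapp]
        exact mul_le_mul_of_nonpos_left (hτmono (Fin.rev_le_rev.mpr h)) (le_of_lt hlt)
      have hst : relSpec (hnorm (c s)) (hnorm (c t)) j = r * a (π ⟨n - j, by omega⟩) := by
        rw [hseq, hteq]
        exact relSpec_qnorm hdim e _ (fun i => r * a i) hlams π hmono j hj1 hj2
      have hrev : π ⟨n - j, by omega⟩ = τ ⟨n - (n + 1 - j), by omega⟩ := by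
        rw [hπapp]
        congr 1
        ext
        show n - (n - j + 1) = n - (n + 1 - j)
        omega
      show |relSpec (hnorm (c s)) (hnorm (c t)) j|
          = |r| * |relSpec (hnorm c₀) (hnorm c₁) (n + 1 - j)|
      rw [hst, hrev, hrel0 (n + 1 - j) (by omega) (by omega), abs_mul]
  obtain ⟨φ, hφ⟩ := key
  have hφmem : ∀ j ∈ Finset.Icc 1 n, φ j ∈ Finset.Icc 1 n := by
    intro j hj
    rw [Finset.mem_Icc] at hj ⊢
    exact ⟨(hφ j hj.1 hj.2).1, (hφ j hj.1 hj.2).2.1⟩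
  constructor
  · -- the d_p statement
    intro p hp
    have hp0 : p ≠ 0 := by linarith
    have hsum : ∑ j ∈ Finset.Icc 1 n, |relSpec (hnorm (c s)) (hnorm (c t)) j| ^ p
        = |r| ^ p * ∑ j ∈ Finset.Icc 1 n, |relSpec (hnorm c₀) (hnorm c₁) j| ^ p := by
      rw [Finset.mul_sum]
      refine Finset.sum_bij' (fun j _ => φ j) (fun j _ => φ j) hφmem hφmem ?_ ?_ ?_
      · intro j hj
        rw [Finset.mem_Icc] at hj
        exact (hφ j hj.1 hj.2).2.2.1
      · intro j hj
        rw [Finset.mem_Icc] at hj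
        exact (hφ j hj.1 hj.2).2.2.1
      · intro j hj
        rw [Finset.mem_Icc] at hj
        rw [(hφ j hj.1 hj.2).2.2.2, Real.mul_rpow (abs_nonneg _) (abs_nonneg _)]
    have hS : 0 ≤ ∑ j ∈ Finset.Icc 1 n, |relSpec (hnorm c₀) (hnorm c₁) j| ^ p :=
      Finset.sum_nonneg fun j _ => Real.rpow_nonneg (abs_nonneg _) p
    have hnpos : (0:ℝ) < (n:ℝ) := by exact_mod_cast hn
    unfold dp
    rw [hdim, hsum, mul_div_assoc,
      Real.mul_rpow (Real.rpow_nonneg (abs_nonneg r) p) (div_nonneg hS (le_of_lt hnpos)),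
      ← Real.rpow_mul (abs_nonneg r), mul_one_div_cancel hp0, Real.rpow_one]
  · -- the d_∞ statement
    have hne : (Finset.Icc 1 n).Nonempty := ⟨1, by rw [Finset.mem_Icc]; omega⟩
    obtain ⟨j₀, hj₀mem, hj₀max⟩ := Finset.exists_max_image (Finset.Icc 1 n)
      (fun j => |relSpec (hnorm c₀) (hnorm c₁) j|) hne
    have hj₀ := Finset.mem_Icc.mp hj₀mem
    have hG0 : IsGreatest {x : ℝ | ∃ j ∈ Finset.Icc 1 n,
        x = |relSpec (hnorm c₀) (hnorm c₁) j|} (|relSpec (hnorm c₀) (hnorm c₁) j₀|) := by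
      constructor
      · exact ⟨j₀, hj₀mem, rfl⟩
      · rintro x ⟨j, hj, rfl⟩
        exact hj₀max j hj
    have hGst : IsGreatest {x : ℝ | ∃ j ∈ Finset.Icc 1 n,
        x = |relSpec (hnorm (c s)) (hnorm (c t)) j|}
        (|r| * |relSpec (hnorm c₀) (hnorm c₁) j₀|) := by
      constructor
      · refine ⟨φ j₀, hφmem j₀ hj₀mem, ?_⟩
        have h1 := hφ j₀ hj₀.1 hj₀.2
        have h2 := hφ (φ j₀) h1.1 h1.2.1
        rw [h2.2.2.2, h1.2.2.1]
      · rintro x ⟨j, hj, rfl⟩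
        have hjm := Finset.mem_Icc.mp hj
        rw [(hφ j hjm.1 hjm.2).2.2.2]
        exact mul_le_mul_of_nonneg_left (hj₀max (φ j) (hφmem j hj)) (abs_nonneg r)
    unfold dInf
    rw [hdim, hG0.csSup_eq, hGst.csSup_eq]

end
end

section
/- Let V be an n-dimensional complex vector space (n ≥ 1), 𝓕 a filtration on V with jumping numbers e_𝓕(1),…,e_𝓕(n), H₀ a Hermitian norm on V, and H_t^𝓕 (t ≥ 0) the geodesic ray of Hermitian norms emanating from H₀ associated with 𝓕 via an adapted orthonormal basis. Then for all t, s ∈ [0,∞) and every p ∈ [1,∞): d_p(H_t^𝓕, H_s^𝓕) = |t − s| · ((1/n)·Σ_{i=1}^n |e_𝓕(i)|^p)^{1/p}, and d_∞(H_t^𝓕, H_s^𝓕) = |t − s| · max_i |e_𝓕(i)|. -/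
open scoped BigOperators
open Filter Classical

noncomputable section

variable {V : Type*} [AddCommGroup V] [Module ℂ V]

namespace GeodAux

/-- A "diagonal" norm given by weights on a basis. -/
def dnorm {n : ℕ} (b : Module.Basis (Fin n) ℂ V) (u : Fin n → ℝ) (v : V) : ℝ :=
  Real.sqrt (∑ i, ‖b.repr v i‖ ^ 2 * u i)

lemma inner_sum_left (c : InnerProductSpace.Core ℂ V) {ι : Type*} (s : Finset ι) (f : ι → V)
    (y : V) : c.inner (∑ i ∈ s, f i) y = ∑ i ∈ s, c.inner (f i) y :=
  map_sum (AddMonoidHom.mk' (fun v => c.inner v y) fun a b => c.add_left a b y) f s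

lemma inner_conj (c : InnerProductSpace.Core ℂ V) (x y : V) :
    c.inner y x = starRingEnd ℂ (c.inner x y) := (c.conj_inner_symm y x).symm

lemma inner_smul_right' (c : InnerProductSpace.Core ℂ V) (x y : V) (r : ℂ) :
    c.inner x (r • y) = r * c.inner x y := by
  rw [inner_conj, c.smul_left, map_mul, Complex.conj_conj, ← inner_conj]

lemma inner_sum_right (c : InnerProductSpace.Core ℂ V) {ι : Type*} (s : Finset ι) (f : ι → V)
    (y : V) : c.inner y (∑ i ∈ s, f i) = ∑ i ∈ s, c.inner y (f i) := by
  rw [inner_conj, inner_sum_left, map_sum]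
  exact Finset.sum_congr rfl fun i _ => (inner_conj c (f i) y).symm

/-- Expansion of the inner form on a basis with diagonal Gram matrix. -/
lemma inner_self_repr (c : InnerProductSpace.Core ℂ V) {n : ℕ} (b : Module.Basis (Fin n) ℂ V)
    (g : Fin n → ℝ) (hg : ∀ i j, c.inner (b i) (b j) = if i = j then (g i : ℂ) else 0)
    (v : V) : (c.inner v v).re = ∑ i, ‖b.repr v i‖ ^ 2 * g i := by
  conv_lhs => rw [← b.sum_repr v]
  rw [inner_sum_left, Complex.re_sum]
  refine Finset.sum_congr rfl fun i _ => ?_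
  rw [c.smul_left, inner_sum_right]
  have h2 : ∀ j : Fin n, c.inner (b i) (b.repr v j • b j)
      = if j = i then (b.repr v i * (g i : ℂ)) else 0 := by
    intro j
    rw [inner_smul_right', hg]
    by_cases h : i = j
    · subst h; simp
    · simp [h, Ne.symm h]
  rw [Finset.sum_congr rfl fun j _ => h2 j, Finset.sum_ite_eq' Finset.univ i
    (fun _ => b.repr v i * (g i : ℂ))]
  simp only [Finset.mem_univ, if_true]
  rw [show (starRingEnd ℂ) (b.repr v i) * (b.repr v i * (g i : ℂ))
      = (b.repr v i * (starRingEnd ℂ) (b.repr v i)) * (g i : ℂ) by ring,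
    Complex.mul_conj]
  rw [show ((Complex.normSq (b.repr v i) : ℂ) * (g i : ℂ))
      = ((Complex.normSq (b.repr v i) * g i : ℝ) : ℂ) by push_cast; ring]
  rw [Complex.ofReal_re, ← Complex.sq_norm]

lemma dnorm_sum_pos {n : ℕ} (b : Module.Basis (Fin n) ℂ V) (u : Fin n → ℝ) (hu : ∀ i, 0 < u i)
    {v : V} (hv : v ≠ 0) : 0 < ∑ i, ‖b.repr v i‖ ^ 2 * u i := by
  have h1 : b.repr v ≠ 0 := fun h => hv (by simpa using congrArg b.repr.symm h)
  obtain ⟨i, hi⟩ := Finsupp.ne_iff.1 h1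
  refine Finset.sum_pos' (fun j _ => mul_nonneg (sq_nonneg _) (hu j).le)
    ⟨i, Finset.mem_univ i, ?_⟩
  have h2 : 0 < ‖b.repr v i‖ := by simpa using hi
  exact mul_pos (pow_pos h2 2) (hu i)

lemma dnorm_pos {n : ℕ} (b : Module.Basis (Fin n) ℂ V) (u : Fin n → ℝ) (hu : ∀ i, 0 < u i)
    {v : V} (hv : v ≠ 0) : 0 < dnorm b u v :=
  Real.sqrt_pos.2 (dnorm_sum_pos b u hu hv)

lemma sqrt_exp_two_mul (m : ℝ) : Real.sqrt (Real.exp (2 * m)) = Real.exp m := by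
  rw [show (2:ℝ) * m = m + m by ring, Real.exp_add, Real.sqrt_mul_self (Real.exp_nonneg m)]

/-- Lower bound for the log-ratio on vectors supported where `lam` is large. -/
lemma le_log_ratio {n : ℕ} (b : Module.Basis (Fin n) ℂ V) (u lam : Fin n → ℝ) (hu : ∀ i, 0 < u i)
    {v : V} (hv : v ≠ 0) {m : ℝ} (hm : ∀ i, b.repr v i ≠ 0 → m ≤ lam i) :
    m ≤ Real.log (dnorm b (fun i => Real.exp (2 * lam i) * u i) v / dnorm b u v) := by
  have hA : 0 < dnorm b u v := dnorm_pos b u hu hv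
  have hB : 0 < dnorm b (fun i => Real.exp (2 * lam i) * u i) v :=
    dnorm_pos b _ (fun i => mul_pos (Real.exp_pos _) (hu i)) hv
  rw [Real.le_log_iff_exp_le (div_pos hB hA), le_div_iff₀ hA]
  have key : Real.exp (2 * m) * (∑ i, ‖b.repr v i‖ ^ 2 * u i)
      ≤ ∑ i, ‖b.repr v i‖ ^ 2 * (Real.exp (2 * lam i) * u i) := by
    rw [Finset.mul_sum]
    refine Finset.sum_le_sum fun i _ => ?_
    by_cases h : b.repr v i = 0
    · simp [h]
    · have h3 := Real.exp_le_exp.2 (mul_le_mul_of_nonneg_left (hm i h) (by norm_num : (0:ℝ) ≤ 2))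
      calc Real.exp (2 * m) * (‖b.repr v i‖ ^ 2 * u i)
          ≤ Real.exp (2 * lam i) * (‖b.repr v i‖ ^ 2 * u i) :=
            mul_le_mul_of_nonneg_right h3 (mul_nonneg (sq_nonneg _) (hu i).le)
        _ = ‖b.repr v i‖ ^ 2 * (Real.exp (2 * lam i) * u i) := by ring
  calc Real.exp m * dnorm b u v
      = Real.sqrt (Real.exp (2 * m) * ∑ i, ‖b.repr v i‖ ^ 2 * u i) := by
        rw [Real.sqrt_mul (Real.exp_nonneg _), sqrt_exp_two_mul]; rfl
    _ ≤ dnorm b (fun i => Real.exp (2 * lam i) * u i) v := Real.sqrt_le_sqrt key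

/-- Upper bound for the log-ratio on vectors supported where `lam` is small. -/
lemma log_ratio_le {n : ℕ} (b : Module.Basis (Fin n) ℂ V) (u lam : Fin n → ℝ) (hu : ∀ i, 0 < u i)
    {v : V} (hv : v ≠ 0) {M : ℝ} (hM : ∀ i, b.repr v i ≠ 0 → lam i ≤ M) :
    Real.log (dnorm b (fun i => Real.exp (2 * lam i) * u i) v / dnorm b u v) ≤ M := by
  have hA : 0 < dnorm b u v := dnorm_pos b u hu hv
  have hB : 0 < dnorm b (fun i => Real.exp (2 * lam i) * u i) v :=
    dnorm_pos b _ (fun i => mul_pos (Real.exp_pos _) (hu i)) hv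
  rw [Real.log_le_iff_le_exp (div_pos hB hA), div_le_iff₀ hA]
  have key : ∑ i, ‖b.repr v i‖ ^ 2 * (Real.exp (2 * lam i) * u i)
      ≤ Real.exp (2 * M) * (∑ i, ‖b.repr v i‖ ^ 2 * u i) := by
    rw [Finset.mul_sum]
    refine Finset.sum_le_sum fun i _ => ?_
    by_cases h : b.repr v i = 0
    · simp [h]
    · have h3 := Real.exp_le_exp.2 (mul_le_mul_of_nonneg_left (hM i h) (by norm_num : (0:ℝ) ≤ 2))
      calc ‖b.repr v i‖ ^ 2 * (Real.exp (2 * lam i) * u i)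
          = Real.exp (2 * lam i) * (‖b.repr v i‖ ^ 2 * u i) := by ring
        _ ≤ Real.exp (2 * M) * (‖b.repr v i‖ ^ 2 * u i) :=
            mul_le_mul_of_nonneg_right h3 (mul_nonneg (sq_nonneg _) (hu i).le)
  calc dnorm b (fun i => Real.exp (2 * lam i) * u i) v
      ≤ Real.sqrt (Real.exp (2 * M) * ∑ i, ‖b.repr v i‖ ^ 2 * u i) :=
        Real.sqrt_le_sqrt key
    _ = Real.exp M * dnorm b u v := by
        rw [Real.sqrt_mul (Real.exp_nonneg _), sqrt_exp_two_mul]; rfl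

lemma span_finset_finrank {n : ℕ} (b : Module.Basis (Fin n) ℂ V) (A : Finset (Fin n)) :
    Module.finrank ℂ (Submodule.span ℂ (⇑b '' ↑A)) = A.card := by
  rw [Set.image_eq_range]
  rw [show (Set.range fun x : ↑(↑A : Set (Fin n)) => b ↑x) = Set.range (⇑b ∘ Subtype.val)
    from rfl]
  rw [finrank_span_eq_card (b.linearIndependent.comp Subtype.val Subtype.val_injective)]
  exact Fintype.card_coe A

lemma mem_span_finset {n : ℕ} (b : Module.Basis (Fin n) ℂ V) (A : Finset (Fin n)) {w : V}
    (hw : w ∈ Submodule.span ℂ (⇑b '' ↑A)) : ∀ i, b.repr w i ≠ 0 → i ∈ A := fun _ hi =>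
  (b.mem_span_image).1 hw (Finsupp.mem_support_iff.2 hi)

/-- The relative spectrum of two diagonal norms is given by sorting the log-ratios. -/
lemma relSpec_dnorm [FiniteDimensional ℂ V] {n : ℕ} (hdim : Module.finrank ℂ V = n)
    (b : Module.Basis (Fin n) ℂ V) (u lam : Fin n → ℝ) (hu : ∀ i, 0 < u i)
    (σ : Equiv.Perm (Fin n)) (hσ : Antitone (lam ∘ σ))
    (N₀ N₁ : V → ℝ) (h₀ : ∀ v, N₀ v = dnorm b u v)
    (h₁ : ∀ v, N₁ v = dnorm b (fun i => Real.exp (2 * lam i) * u i) v)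
    (k : Fin n) :
    relSpec N₀ N₁ (k.1 + 1) = lam (σ k) := by
  classical
  have hlow : ∀ (w : V), w ≠ 0 → ∀ m : ℝ, (∀ i, b.repr w i ≠ 0 → m ≤ lam i) →
      m ≤ Real.log (N₁ w / N₀ w) := by
    intro w hw m hm; rw [h₀, h₁]; exact le_log_ratio b u lam hu hw hm
  have hupp : ∀ (w : V), w ≠ 0 → ∀ M : ℝ, (∀ i, b.repr w i ≠ 0 → lam i ≤ M) →
      Real.log (N₁ w / N₀ w) ≤ M := by
    intro w hw M hM; rw [h₀, h₁]; exact log_ratio_le b u lam hu hw hM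
  have hne : (Finset.univ : Finset (Fin n)).Nonempty := ⟨k, Finset.mem_univ k⟩
  set mG : ℝ := Finset.univ.inf' hne lam with hmGdef
  have hmG : ∀ w : V, w ≠ 0 → mG ≤ Real.log (N₁ w / N₀ w) := fun w hw =>
    hlow w hw mG fun i _ => Finset.inf'_le lam (Finset.mem_univ i)
  have hinn_bdd : ∀ W : Submodule ℂ V,
      BddBelow {x : ℝ | ∃ w ∈ W, w ≠ 0 ∧ x = Real.log (N₁ w / N₀ w)} := fun W =>
    ⟨mG, by rintro x ⟨w, _, hw0, rfl⟩; exact hmG w hw0⟩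
  have hinn_ne : ∀ W : Submodule ℂ V, Module.finrank ℂ W = k.1 + 1 →
      {x : ℝ | ∃ w ∈ W, w ≠ 0 ∧ x = Real.log (N₁ w / N₀ w)}.Nonempty := by
    intro W hW
    obtain ⟨w, hwW, hw0⟩ := Submodule.exists_mem_ne_zero_of_ne_bot (p := W) (by
      intro h; rw [h, finrank_bot] at hW; omega)
    exact ⟨_, w, hwW, hw0, rfl⟩
  have hub : ∀ W : Submodule ℂ V, Module.finrank ℂ W = k.1 + 1 →
      sInf {x : ℝ | ∃ w ∈ W, w ≠ 0 ∧ x = Real.log (N₁ w / N₀ w)} ≤ lam (σ k) := by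
    intro W hW
    set T : Finset (Fin n) := (Finset.Ici k).image σ with hTdef
    have hT : T.card = n - k.1 := by
      rw [hTdef, Finset.card_image_of_injective _ σ.injective, Fin.card_Ici]
    have hU : Module.finrank ℂ (Submodule.span ℂ (⇑b '' ↑T)) = n - k.1 :=
      (span_finset_finrank b T).trans hT
    have hk : k.1 < n := k.isLt
    have hnb : W ⊓ Submodule.span ℂ (⇑b '' ↑T) ≠ ⊥ := by
      intro h
      have h2 := Submodule.finrank_sup_add_finrank_inf_eq W (Submodule.span ℂ (⇑b '' ↑T))
      rw [h, finrank_bot, hW, hU] at h2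
      have h3 : Module.finrank ℂ ↥(W ⊔ Submodule.span ℂ (⇑b '' ↑T)) ≤ n :=
        le_of_le_of_eq (Submodule.finrank_le _) hdim
      omega
    obtain ⟨w, hw, hw0⟩ := Submodule.exists_mem_ne_zero_of_ne_bot hnb
    have hwW : w ∈ W := (Submodule.mem_inf.1 hw).1
    have hx : Real.log (N₁ w / N₀ w) ≤ lam (σ k) := by
      refine hupp w hw0 _ fun i hi => ?_
      obtain ⟨m, hm, rfl⟩ :=
        Finset.mem_image.1 (mem_span_finset b T (Submodule.mem_inf.1 hw).2 i hi)
      exact hσ (Finset.mem_Ici.1 hm)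
    exact csInf_le_of_le (hinn_bdd W) ⟨w, hwW, hw0, rfl⟩ hx
  set S : Finset (Fin n) := (Finset.Iic k).image σ with hSdef
  have hS : S.card = k.1 + 1 := by
    rw [hSdef, Finset.card_image_of_injective _ σ.injective, Fin.card_Iic]
  have hW₀ : Module.finrank ℂ (Submodule.span ℂ (⇑b '' ↑S)) = k.1 + 1 :=
    (span_finset_finrank b S).trans hS
  have hlb : lam (σ k) ≤ sInf {x : ℝ | ∃ w ∈ Submodule.span ℂ (⇑b '' ↑S), w ≠ 0 ∧
      x = Real.log (N₁ w / N₀ w)} := by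
    refine le_csInf (hinn_ne _ hW₀) ?_
    rintro x ⟨w, hwW, hw0, rfl⟩
    refine hlow w hw0 _ fun i hi => ?_
    obtain ⟨m, hm, rfl⟩ := Finset.mem_image.1 (mem_span_finset b S hwW i hi)
    exact hσ (Finset.mem_Iic.1 hm)
  rw [relSpec]
  apply le_antisymm
  · refine csSup_le ⟨_, ⟨_, hW₀, rfl⟩⟩ ?_
    rintro r ⟨W, hW, rfl⟩
    exact hub W hW
  · refine le_trans hlb (le_csSup ⟨lam (σ k), ?_⟩ ⟨_, hW₀, rfl⟩)
    rintro r ⟨W, hW, rfl⟩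
    exact hub W hW

end GeodAux

/-- along a geodesic ray of Hermitian norms associated with a filtration `𝓕`,
for all `t, s ≥ 0`,
`d_p(H_t^𝓕, H_s^𝓕) = |t−s| · ((1/n)·Σᵢ |e_𝓕(i)|^p)^{1/p}` for `p ∈ [1,∞)` and
`d_∞(H_t^𝓕, H_s^𝓕) = |t−s| · maxᵢ |e_𝓕(i)|`. -/
theorem geodesic_ray_distance_formula
    {V : Type*} [AddCommGroup V] [Module ℂ V] [FiniteDimensional ℂ V]
    {n : ℕ} (hn : 1 ≤ n) (hdim : Module.finrank ℂ V = n)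
    (F : ℝ → Submodule ℂ V) (hF : IsFiltration' F)
    (b : Module.Basis (Fin n) ℂ V) (c : ℝ → InnerProductSpace.Core ℂ V)
    (hray : IsGeodesicRayFor F (⇑b) c) :
    ∀ t s : ℝ, 0 ≤ t → 0 ≤ s →
      (∀ p : ℝ, 1 ≤ p →
        dp p (hnorm (c t)) (hnorm (c s)) =
          |t - s| * ((∑ i : Fin n, |jumpNum F (i.1 + 1)| ^ p) / n) ^ (1 / p)) ∧
      dInf (hnorm (c t)) (hnorm (c s)) = |t - s| * ⨆ i : Fin n, |jumpNum F (i.1 + 1)| := by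
  classical
  intro t s ht hs
  set e : Fin n → ℝ := fun i => jumpNum F (i.1 + 1) with he
  -- the Gram matrix of `c t` on the basis is diagonal
  have key : ∀ t : ℝ, 0 ≤ t → ∀ i j : Fin n, (c t).inner (b i) (b j)
      = if i = j then ((Real.exp (-(2*t) * e i) : ℝ) : ℂ) else 0 := by
    intro t ht i j
    have h := hray.2.2 t ht i j
    rw [← Complex.coe_smul, ← Complex.coe_smul, (c t).smul_left, GeodAux.inner_smul_right',
      Complex.conj_ofReal] at h
    have hA : ((Real.exp (t * e i) : ℝ) : ℂ) ≠ 0 := Complex.ofReal_ne_zero.2 (Real.exp_ne_zero _)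
    have hB : ((Real.exp (t * e j) : ℝ) : ℂ) ≠ 0 := Complex.ofReal_ne_zero.2 (Real.exp_ne_zero _)
    have hmul : (c t).inner (b i) (b j)
        = (((Real.exp (t * e i) : ℝ) : ℂ) * ((Real.exp (t * e j) : ℝ) : ℂ))⁻¹
          * (if i = j then 1 else 0) := by
      have h' : ((Real.exp (t * e i) : ℝ) : ℂ)
          * (((Real.exp (t * e j) : ℝ) : ℂ) * (c t).inner (b i) (b j))
          = if i = j then 1 else 0 := h
      rw [← h']
      field_simp
    rw [hmul]
    by_cases hij : i = j
    · subst hij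
      rw [if_pos rfl, if_pos rfl, mul_one, ← Complex.ofReal_mul, ← Real.exp_add,
        ← Complex.ofReal_inv, ← Real.exp_neg]
      congr 1
      ring
    · simp [hij]
  -- the geodesic norms are diagonal norms
  have hnorm_eq : ∀ t : ℝ, 0 ≤ t → ∀ v : V,
      hnorm (c t) v = GeodAux.dnorm b (fun i => Real.exp (-(2*t) * e i)) v := by
    intro t ht v
    show Real.sqrt _ = Real.sqrt _
    congr 1
    exact GeodAux.inner_self_repr (c t) b _ (key t ht) v
  -- the sorted log-ratios
  set lam : Fin n → ℝ := fun i => (t - s) * e i with hlam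
  set σ : Equiv.Perm (Fin n) := Tuple.sort (fun i => -(lam i)) with hσdef
  have hσ : Antitone (lam ∘ σ) := by
    intro a b' hab
    have h := Tuple.monotone_sort (fun i => -(lam i)) hab
    simpa using h
  have hu : ∀ i, (0:ℝ) < Real.exp (-(2*t) * e i) := fun i => Real.exp_pos _
  have h₁ : ∀ v : V, hnorm (c s) v
      = GeodAux.dnorm b (fun i => Real.exp (2 * lam i) * Real.exp (-(2*t) * e i)) v := by
    intro v
    rw [hnorm_eq s hs v]
    have hfun : (fun i => Real.exp (2 * lam i) * Real.exp (-(2*t) * e i))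
        = fun i => Real.exp (-(2*s) * e i) := by
      funext i
      rw [← Real.exp_add]
      congr 1
      simp only [hlam]
      ring
    rw [hfun]
  have hrel : ∀ k : Fin n, relSpec (hnorm (c t)) (hnorm (c s)) (k.1 + 1) = lam (σ k) :=
    fun k => GeodAux.relSpec_dnorm hdim b _ lam hu σ hσ _ _ (hnorm_eq t ht) h₁ k
  have habs : ∀ i, |lam i| = |t - s| * |e i| := fun i => by rw [hlam]; exact abs_mul _ _
  constructor
  · -- the `d_p` formula
    intro p hp
    have hp0 : p ≠ 0 := by linarith
    rw [dp, hdim]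
    have hsum : ∑ j ∈ Finset.Icc 1 n, |relSpec (hnorm (c t)) (hnorm (c s)) j| ^ p
        = |t - s| ^ p * ∑ i : Fin n, |e i| ^ p := by
      rw [← Finset.Ico_add_one_right_eq_Icc, Finset.sum_Ico_eq_sum_range]
      simp only [Nat.add_sub_cancel]
      rw [← Fin.sum_univ_eq_sum_range (fun j => |relSpec (hnorm (c t)) (hnorm (c s)) (1 + j)| ^ p) n]
      have hterm : ∀ k : Fin n, |relSpec (hnorm (c t)) (hnorm (c s)) (1 + k.1)| ^ p
          = |t - s| ^ p * |e (σ k)| ^ p := by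
        intro k
        rw [Nat.add_comm, hrel k, habs, Real.mul_rpow (abs_nonneg _) (abs_nonneg _)]
      rw [Finset.sum_congr rfl fun k _ => hterm k, ← Finset.mul_sum]
      congr 1
      exact Equiv.sum_comp σ (fun i => |e i| ^ p)
    rw [hsum, mul_div_assoc,
      Real.mul_rpow (Real.rpow_nonneg (abs_nonneg _) p)
        (div_nonneg (Finset.sum_nonneg fun i _ => Real.rpow_nonneg (abs_nonneg _) p)
          (Nat.cast_nonneg n)),
      ← Real.rpow_mul (abs_nonneg _), mul_one_div_cancel hp0, Real.rpow_one]
  · -- the `d_∞` formula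
    rw [dInf, hdim]
    have hset : {r : ℝ | ∃ j ∈ Finset.Icc 1 n, r = |relSpec (hnorm (c t)) (hnorm (c s)) j|}
        = Set.range (fun i : Fin n => |t - s| * |e i|) := by
      ext r
      constructor
      · rintro ⟨j, hj, rfl⟩
        obtain ⟨hj1, hj2⟩ := Finset.mem_Icc.1 hj
        have hjlt : j - 1 < n := by omega
        refine ⟨σ ⟨j - 1, hjlt⟩, ?_⟩
        have hj' : (⟨j - 1, hjlt⟩ : Fin n).1 + 1 = j := by show j - 1 + 1 = j; omega
        show |t - s| * |e (σ ⟨j - 1, hjlt⟩)| = _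
        have h5 := hrel ⟨j - 1, hjlt⟩
        rw [hj'] at h5
        rw [h5, habs]
      · rintro ⟨i, rfl⟩
        refine ⟨(σ.symm i).1 + 1, Finset.mem_Icc.2 ⟨by omega, by have := (σ.symm i).isLt; omega⟩, ?_⟩
        rw [hrel (σ.symm i), habs, Equiv.apply_symm_apply]
    rw [hset, Real.mul_iSup_of_nonneg (abs_nonneg _)]
    rfl

end
end
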